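/- arXiv:2111.10702 — 3 statements merged into one kernel-verified Lean document; each statement's English description precedes it below -/
import Mathlib

section
/- For every nonnegative integer n, Q_0(n) = pod(n) + 2 * \sum_{k=1}^{\infty} (-1)^k pod(n - 4k^2), where terms with negative argument are zero. -/
/-- `Q0 n`: number of partitions of `n` into distinct parts none divisible by 4. -/
noncomputable def Q0 (n : ℕ) : ℕ :=
  Nat.card {p : n.Partition // p.parts.Nodup ∧ ∀ x ∈ p.parts, ¬ (4 ∣ x)}

/-- `pod n`: partitions of `n` into parts not congruent to 2 mod 4. -/
noncomputable def pod (n : ℕ) : ℕ :=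
  Nat.card {p : n.Partition // ∀ x ∈ p.parts, x % 4 ≠ 2}

/-- `pod` extended to integer arguments, zero on negatives. -/
noncomputable def podZ (m : ℤ) : ℕ := if 0 ≤ m then pod m.toNat else 0

open Polynomial Finset

namespace Stmt4

/-- Gaussian binomial coefficient in the variable `Q = X ^ 2`. -/
noncomputable def qb : ℕ → ℕ → ℚ[X]
  | 0, 0 => 1
  | 0, _ + 1 => 0
  | _ + 1, 0 => 1
  | n + 1, k + 1 => qb n (k + 1) * X ^ (2 * (k + 1)) + qb n k

@[simp] lemma qb_zero_right (n : ℕ) : qb n 0 = 1 := by cases n <;> rfl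

@[simp] lemma qb_zero_succ (k : ℕ) : qb 0 (k + 1) = 0 := rfl

lemma qb_succ_succ (n k : ℕ) :
    qb (n + 1) (k + 1) = qb n (k + 1) * X ^ (2 * (k + 1)) + qb n k := rfl

lemma qb_eq_zero {n k : ℕ} (h : n < k) : qb n k = 0 := by
  induction n generalizing k with
  | zero => match k, h with | k + 1, _ => rfl
  | succ n ih =>
      match k, h with
      | k + 1, h =>
        rw [qb_succ_succ, ih (by omega), ih (by omega), zero_mul, zero_add]

@[simp] lemma qb_self (n : ℕ) : qb n n = 1 := by
  induction n with
  | zero => rfl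
  | succ n ih => rw [qb_succ_succ, qb_eq_zero (by omega), zero_mul, zero_add, ih]

/-- `F a = (Q;Q)_a` with `Q = X ^ 2`. -/
noncomputable def F (a : ℕ) : ℚ[X] := ∏ j ∈ range a, (1 - X ^ (2 * (j + 1)))

@[simp] lemma F_zero : F 0 = 1 := by simp [F]

lemma F_succ (a : ℕ) : F (a + 1) = F a * (1 - X ^ (2 * (a + 1))) := by
  rw [F, prod_range_succ, F]

lemma one_sub_X_pow_ne_zero {m : ℕ} (hm : 0 < m) : (1 - X ^ m : ℚ[X]) ≠ 0 := by
  intro h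
  have := congrArg (Polynomial.eval 0) h
  simp [zero_pow hm.ne'] at this

lemma F_ne_zero (a : ℕ) : F a ≠ 0 := by
  refine prod_ne_zero_iff.2 fun j _ => one_sub_X_pow_ne_zero (by omega)

/-- The q-factorial identity. -/
lemma fact_id : ∀ n a b : ℕ, a + b = n → qb n a * F a * F b = F n := by
  intro n
  induction n with
  | zero =>
      intro a b h
      obtain rfl : a = 0 := by omega
      obtain rfl : b = 0 := by omega
      simp
  | succ n ih =>
      intro a b hab
      cases a with
      | zero =>
          obtain rfl : b = n + 1 := by omega
          simp
      | succ k =>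
        cases b with
        | zero =>
            obtain rfl : k = n := by omega
            simp
        | succ b =>
            obtain rfl : n = k + b + 1 := by omega
            have h1 := ih (k + 1) b (by omega)
            have h2 := ih k (b + 1) (by omega)
            have fsk := F_succ k
            have fsb := F_succ b
            rw [qb_succ_succ, F_succ (k + b + 1)]
            linear_combination (X ^ (2 * (k + 1)) * (1 - X ^ (2 * (b + 1)))) * h1
              + (1 - X ^ (2 * (k + 1))) * h2
              + (qb (k + b + 1) k * F (b + 1)) * fsk
              + (qb (k + b + 1) (k + 1) * X ^ (2 * (k + 1)) * F (k + 1)) * fsb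

lemma qb_symm {n a : ℕ} (h : a ≤ n) : qb n a = qb n (n - a) := by
  have h1 := fact_id n a (n - a) (by omega)
  have h2 := fact_id n (n - a) a (by omega)
  have : qb n a * (F a * F (n - a)) = qb n (n - a) * (F a * F (n - a)) := by
    rw [← mul_assoc, h1, ← mul_assoc]
    rw [show qb n (n-a) * F a * F (n-a) = qb n (n - a) * F (n - a) * F a by ring, h2]
  exact mul_right_cancel₀ (mul_ne_zero (F_ne_zero a) (F_ne_zero (n - a))) this

/-- The second Pascal recurrence. -/
lemma qb_succ_succ' (n k : ℕ) (hk : k ≤ n) :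
    qb (n + 1) (k + 1) = qb n (k + 1) + X ^ (2 * (n - k)) * qb n k := by
  rcases Nat.eq_or_lt_of_le hk with rfl | hk'
  · rw [qb_eq_zero (show k < k + 1 by omega), qb_self, qb_self]; simp
  · -- multiply both sides by F (k+1) * F (n - k) and use fact_id
    have hne : (F (k + 1) * F (n - k) : ℚ[X]) ≠ 0 :=
      mul_ne_zero (F_ne_zero _) (F_ne_zero _)
    refine mul_right_cancel₀ hne ?_
    have h1 := fact_id (n + 1) (k + 1) (n - k) (by omega)
    have h2 := fact_id n (k + 1) (n - k - 1) (by omega)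
    have h3 := fact_id n k (n - k) (by omega)
    have e1 : F (n - k) = F (n - k - 1) * (1 - X ^ (2 * (n - k))) := by
      conv_lhs => rw [show n - k = n - k - 1 + 1 by omega]
      rw [F_succ, show n - k - 1 + 1 = n - k by omega]
    have e2 : F (k + 1) = F k * (1 - X ^ (2 * (k + 1))) := F_succ k
    calc qb (n + 1) (k + 1) * (F (k + 1) * F (n - k))
        = F (n + 1) := by rw [← mul_assoc]; exact h1
      _ = F n * (1 - X ^ (2 * (n + 1))) := F_succ n
      _ = F n * (1 - X ^ (2 * (n - k))) + X ^ (2 * (n - k)) * F n * (1 - X ^ (2 * (k + 1))) := by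
          rw [show 2 * (n + 1) = 2 * (n - k) + 2 * (k + 1) by omega, pow_add]; ring
      _ = qb n (k + 1) * F (k + 1) * F (n - k - 1) * (1 - X ^ (2 * (n - k)))
          + X ^ (2 * (n - k)) * (qb n k * F k * F (n - k)) * (1 - X ^ (2 * (k + 1))) := by
          rw [h2, h3]
      _ = (qb n (k + 1) + X ^ (2 * (n - k)) * qb n k) * (F (k + 1) * F (n - k)) := by
          rw [e1, e2]; ring

/-- The two-step Pascal recurrence needed for the Jacobi triple product induction. -/
lemma qb_two_step (M m : ℕ) :
    qb (M + 2) (m + 2) = (1 + X ^ (2 * (M + 1))) * qb M (m + 1)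
      + X ^ (2 * (m + 2)) * qb M (m + 2) + X ^ (2 * (M - m)) * qb M m := by
  rcases le_or_gt m M with hm | hm
  · have A : qb (M + 2) (m + 2) = qb (M + 1) (m + 2) * X ^ (2 * (m + 2)) + qb (M + 1) (m + 1) :=
      qb_succ_succ (M + 1) (m + 1)
    rcases Nat.eq_or_lt_of_le hm with rfl | hm'
    · rw [A, qb_succ_succ' m m le_rfl, qb_succ_succ (m) (m + 1),
        qb_eq_zero (show m < m + 2 by omega), qb_eq_zero (show m < m + 1 by omega)]
      simp only [Nat.sub_self, mul_zero, pow_zero, one_mul, zero_mul, zero_add, add_zero,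
        mul_zero]
      try ring
    · rw [A, qb_succ_succ' M (m + 1) (by omega), qb_succ_succ' M m (by omega)]
      rw [show M - (m + 1) = M - m - 1 by omega]
      have : X ^ (2 * (m + 2)) * X ^ (2 * (M - m - 1)) = (X : ℚ[X]) ^ (2 * (M + 1)) := by
        rw [← pow_add]; congr 1; omega
      calc (qb M (m + 2) + X ^ (2 * (M - m - 1)) * qb M (m + 1)) * X ^ (2 * (m + 2))
            + (qb M (m + 1) + X ^ (2 * (M - m)) * qb M m)
          = qb M (m + 1) * (X ^ (2 * (m + 2)) * X ^ (2 * (M - m - 1))) +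
            X ^ (2 * (m + 2)) * qb M (m + 2) + X ^ (2 * (M - m)) * qb M m + qb M (m + 1) := by
            ring
        _ = _ := by rw [this]; try ring
  · rw [qb_eq_zero (show M + 2 < m + 2 by omega), qb_eq_zero (show M < m + 1 by omega),
      qb_eq_zero (show M < m + 2 by omega), qb_eq_zero (show M < m by omega)]
    simp

lemma qb_one (M : ℕ) :
    qb (M + 2) 1 = (1 + X ^ (2 * (M + 1))) * qb M 0 + X ^ 2 * qb M 1 := by
  have A : qb (M + 2) 1 = qb (M + 1) 1 * X ^ 2 + qb (M + 1) 0 := by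
    have := qb_succ_succ (M + 1) 0
    simpa using this
  have B : qb (M + 1) 1 = qb M 1 + X ^ (2 * M) * qb M 0 := by
    have := qb_succ_succ' M 0 (Nat.zero_le M)
    simpa using this
  rw [A, B]
  simp only [qb_zero_right, qb_zero_right]
  have : (X:ℚ[X]) ^ (2 * M) * X ^ 2 = X ^ (2 * (M + 1)) := by
    rw [← pow_add]; congr 1; try ring
  linear_combination (qb M 0) * this

/-- `qb (a+b) a * F b` as a trailing product. -/
lemma qb_mul_F (a b : ℕ) :
    qb (a + b) a * F b = ∏ j ∈ Ico a (a + b), (1 - X ^ (2 * (j + 1))) := by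
  refine mul_right_cancel₀ (F_ne_zero a) ?_
  have h : qb (a + b) a * F b * F a = F (a + b) := by
    have := fact_id (a + b) a b rfl; rw [← this]; ring
  have key : (∏ j ∈ Ico a (a + b), (1 - X ^ (2 * (j + 1)) : ℚ[X])) * F a = F (a + b) := by
    rw [F, F, mul_comm]
    exact Finset.prod_range_mul_prod_Ico _ (by omega)
  rw [h, ← key]

lemma natAbs_cast_sq (a : ℤ) : ((a.natAbs ^ 2 : ℕ) : ℤ) = a ^ 2 := by
  push_cast
  simp [sq_abs]

/-- exponent `(i - n)^2`. -/
def e (n i : ℕ) : ℕ := ((i : ℤ) - n).natAbs ^ 2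

noncomputable def t (n i : ℕ) : ℚ[X] := qb (2 * n) i * X ^ e n i

noncomputable def Jsum (n : ℕ) : Polynomial ℚ[X] :=
  ∑ i ∈ range (2 * n + 1), Polynomial.C (t n i) * X ^ i

lemma t_def (n i : ℕ) : t n i = qb (2 * n) i * X ^ e n i := rfl

lemma t_eq_zero {n i : ℕ} (h : 2 * n < i) : t n i = 0 := by
  rw [t, qb_eq_zero h, zero_mul]

lemma coeff_Jsum (n j : ℕ) : (Jsum n).coeff j = t n j := by
  rw [Jsum, Polynomial.finset_sum_coeff]
  simp only [Polynomial.coeff_C_mul, Polynomial.coeff_X_pow, mul_ite, mul_one, mul_zero]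
  rw [Finset.sum_ite_eq (range (2 * n + 1)) j (t n)]
  split_ifs with h
  · rfl
  · rw [t_eq_zero (by simp at h; omega)]

lemma key0 (n : ℕ) : e (n + 1) 0 = e n 0 + (2 * n + 1) := by
  refine (Nat.cast_inj (R := ℤ)).mp ?_
  unfold e
  push_cast
  simp only [sq_abs]
  ring

lemma key1a (n : ℕ) : e (n + 1) 1 = e n 0 := by
  refine (Nat.cast_inj (R := ℤ)).mp ?_
  unfold e
  push_cast
  simp only [sq_abs]
  ring

lemma key1b (n : ℕ) : e n 1 + (2 * n + 1) = e n 0 + 2 := by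
  refine (Nat.cast_inj (R := ℤ)).mp ?_
  unfold e
  push_cast
  simp only [sq_abs]
  ring

lemma keyS (n m : ℕ) : e (n + 1) (m + 2) = e n (m + 1) := by
  refine (Nat.cast_inj (R := ℤ)).mp ?_
  unfold e
  push_cast
  simp only [sq_abs]
  ring

lemma keyB1 (n m : ℕ) : e n (m + 2) + (2 * n + 1) = 2 * (m + 2) + e n (m + 1) := by
  refine (Nat.cast_inj (R := ℤ)).mp ?_
  unfold e
  push_cast
  simp only [sq_abs]
  ring

lemma keyB2 (n m : ℕ) (h : m ≤ 2 * n) :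
    e n m + (2 * n + 1) = 2 * (2 * n - m) + e n (m + 1) := by
  refine (Nat.cast_inj (R := ℤ)).mp ?_
  unfold e
  push_cast [Nat.cast_sub h]
  simp only [sq_abs]
  ring

lemma coeff_mul_quad (p : Polynomial ℚ[X]) (a b c : ℚ[X]) (j : ℕ) :
    (p * (Polynomial.C a + Polynomial.C b * X + Polynomial.C c * X ^ 2)).coeff j
      = p.coeff j * a + (if 1 ≤ j then p.coeff (j - 1) else 0) * b
        + (if 2 ≤ j then p.coeff (j - 2) else 0) * c := by
  rw [mul_add, mul_add, Polynomial.coeff_add, Polynomial.coeff_add]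
  congr 1
  · congr 1
    · exact Polynomial.coeff_mul_C p j a
    · rw [show p * (Polynomial.C b * X) = p * Polynomial.C b * X ^ 1 by ring,
        Polynomial.coeff_mul_X_pow']
      simp only [Polynomial.coeff_mul_C, ite_mul, zero_mul]
  · rw [show p * (Polynomial.C c * X ^ 2) = p * Polynomial.C c * X ^ 2 by ring,
      Polynomial.coeff_mul_X_pow']
    simp only [Polynomial.coeff_mul_C, ite_mul, zero_mul]

/-- The finite Jacobi triple product, specialized to base `q`. -/
lemma jtp (n : ℕ) :
    (∏ j ∈ range n, ((1 + (X : Polynomial ℚ[X]) * Polynomial.C (X ^ (2 * j + 1))) *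
      ((X : Polynomial ℚ[X]) + Polynomial.C (X ^ (2 * j + 1))))) = Jsum n := by
  induction n with
  | zero =>
      simp [Jsum, t, e]
  | succ n ih =>
      rw [prod_range_succ, ih]
      have hC2 : (Polynomial.C ((X : ℚ[X]) ^ (2 * n + 1))) ^ 2
          = Polynomial.C ((X : ℚ[X]) ^ (4 * n + 2)) := by
        rw [← map_pow, ← pow_mul]
        congr 2
        ring
      have quart : ((1 + (X : Polynomial ℚ[X]) * Polynomial.C (X ^ (2 * n + 1))) *
          ((X : Polynomial ℚ[X]) + Polynomial.C (X ^ (2 * n + 1))))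
          = Polynomial.C ((X : ℚ[X]) ^ (2 * n + 1))
            + Polynomial.C (1 + (X : ℚ[X]) ^ (4 * n + 2)) * X
            + Polynomial.C ((X : ℚ[X]) ^ (2 * n + 1)) * X ^ 2 := by
        rw [map_add, map_one]
        linear_combination (X : Polynomial ℚ[X]) * hC2
      rw [quart]
      apply Polynomial.ext
      intro j
      rw [coeff_mul_quad]
      simp only [coeff_Jsum]
      match j with
      | 0 =>
          simp only [show ¬ (1 ≤ 0) by omega, show ¬ (2 ≤ 0) by omega, if_false,
            zero_mul, add_zero]
          simp only [t_def, qb_zero_right, one_mul]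
          rw [← pow_add, key0]
      | 1 =>
          simp only [show (1:ℕ) ≤ 1 by omega, show ¬ (2 ≤ 1) by omega, if_true, if_false,
            zero_mul, add_zero]
          have h1 := qb_one (2 * n)
          have eB : (X : ℚ[X]) ^ e n 1 * X ^ (2 * n + 1) = X ^ e n 0 * X ^ 2 := by
            rw [← pow_add, ← pow_add, key1b]
          rw [show (1:ℕ) - 1 = 0 from rfl]
          simp only [t_def]
          rw [key1a, show 2 * (n + 1) = 2 * n + 2 by ring]
          linear_combination (-((X : ℚ[X]) ^ e n 0) * h1) + qb (2 * n) 1 * eB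
      | (m + 2) =>
          simp only [show (1:ℕ) ≤ m + 2 by omega, show (2:ℕ) ≤ m + 2 by omega, if_true]
          rw [show m + 2 - 1 = m + 1 by omega, show m + 2 - 2 = m by omega]
          rcases le_or_gt m (2 * n) with hm | hm
          · have h2 := qb_two_step (2 * n) m
            have eB1 : (X : ℚ[X]) ^ e n (m + 2) * X ^ (2 * n + 1)
                = X ^ (2 * (m + 2)) * X ^ e n (m + 1) := by
              rw [← pow_add, ← pow_add, keyB1]
            have eB2 : (X : ℚ[X]) ^ e n m * X ^ (2 * n + 1)
                = X ^ (2 * (2 * n - m)) * X ^ e n (m + 1) := by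
              rw [← pow_add, ← pow_add, keyB2 n m hm]
            simp only [t_def]
            rw [keyS, show 2 * (n + 1) = 2 * n + 2 by ring]
            linear_combination (-((X : ℚ[X]) ^ e n (m + 1)) * h2)
              + qb (2 * n) (m + 2) * eB1 + qb (2 * n) m * eB2
          · rw [t_eq_zero (show 2 * (n + 1) < m + 2 by omega),
              t_eq_zero (show 2 * n < m + 2 by omega),
              t_eq_zero (show 2 * n < m + 1 by omega),
              t_eq_zero (show 2 * n < m by omega)]
            simp

/-! ### Evaluation at `z = -1` and the Gauss congruence -/

lemma jtp_eval (n : ℕ) :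
    (-1 : ℚ[X]) ^ n * ∏ j ∈ range n, (1 - X ^ (2 * j + 1)) ^ 2
      = ∑ i ∈ range (2 * n + 1), t n i * (-1) ^ i := by
  have h := congrArg (Polynomial.eval (-1 : ℚ[X])) (jtp n)
  simp only [Polynomial.eval_prod, Polynomial.eval_mul, Polynomial.eval_add,
    Polynomial.eval_one, Polynomial.eval_X, Polynomial.eval_C, Jsum,
    Polynomial.eval_finset_sum, Polynomial.eval_pow] at h
  rw [← h]
  have hcongr : ∏ x ∈ range n, (1 + -1 * X ^ (2 * x + 1)) * (-1 + X ^ (2 * x + 1))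
      = ∏ x ∈ range n, (-1 : ℚ[X]) * (1 - X ^ (2 * x + 1)) ^ 2 :=
    Finset.prod_congr rfl fun j _ => by ring
  rw [hcongr, Finset.prod_mul_distrib, Finset.prod_const, Finset.card_range]

lemma e_nn (n : ℕ) : e n n = 0 := by simp [e]

lemma e_add (n k : ℕ) : e n (n + k) = k ^ 2 := by
  refine (Nat.cast_inj (R := ℤ)).mp ?_
  unfold e
  push_cast
  simp only [sq_abs]
  ring

lemma e_sub (n k : ℕ) (hk : k ≤ n) : e n (n - k) = k ^ 2 := by
  refine (Nat.cast_inj (R := ℤ)).mp ?_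
  unfold e
  push_cast [Nat.cast_sub hk]
  simp only [sq_abs]
  ring

lemma qb_symm' (n k : ℕ) (hk : k ≤ n) : qb (2 * n) (n - k) = qb (2 * n) (n + k) := by
  have h := qb_symm (show n - k ≤ 2 * n by omega)
  rwa [show 2 * n - (n - k) = n + k by omega] at h

lemma sum_center {M : Type*} [AddCommMonoid M] (n : ℕ) (h : ℕ → M) :
    ∑ i ∈ range (2 * n + 1), h i
      = h n + (∑ k ∈ Icc 1 n, h (n - k)) + ∑ k ∈ Icc 1 n, h (n + k) := by
  have e1 : ∑ k ∈ Icc 1 n, h (n - k) = ∑ i ∈ range n, h i := by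
    refine Finset.sum_nbij' (fun k => n - k) (fun i => n - i) ?_ ?_ ?_ ?_ ?_ <;>
      intro a ha <;> simp only [mem_Icc, mem_range] at * <;> omega
  have e2 : ∑ k ∈ Icc 1 n, h (n + k) = ∑ i ∈ Ico (n + 1) (2 * n + 1), h i := by
    refine Finset.sum_nbij' (fun k => n + k) (fun i => i - n) ?_ ?_ ?_ ?_ ?_ <;>
      intro a ha <;> simp only [mem_Icc, mem_Ico] at * <;> omega
  rw [e1, e2]
  have e3 : ∑ i ∈ range (n + 1), h i + ∑ i ∈ Ico (n + 1) (2 * n + 1), h i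
      = ∑ i ∈ range (2 * n + 1), h i := by
    rw [Finset.range_eq_Ico, Finset.range_eq_Ico]
    exact Finset.sum_Ico_consecutive h (m := 0) (n := n + 1) (k := 2 * n + 1) (by omega) (by omega)
  rw [← e3, Finset.sum_range_succ]
  abel

lemma dvd_sub_one_mul {m : ℕ} {a b : ℚ[X]} (h1 : (X : ℚ[X]) ^ m ∣ a - 1)
    (h2 : (X : ℚ[X]) ^ m ∣ b - 1) : (X : ℚ[X]) ^ m ∣ a * b - 1 := by
  have : a * b - 1 = (a - 1) * b + (b - 1) := by ring
  rw [this]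
  exact dvd_add (h1.mul_right b) h2

lemma dvd_sub_one_prod {ι : Type*} {m : ℕ} {s : Finset ι} {g : ι → ℚ[X]}
    (h : ∀ i ∈ s, (X : ℚ[X]) ^ m ∣ g i - 1) : (X : ℚ[X]) ^ m ∣ (∏ i ∈ s, g i) - 1 := by
  classical
  induction s using Finset.cons_induction with
  | empty => simp
  | cons a s ha ih =>
      rw [Finset.prod_cons]
      exact dvd_sub_one_mul (h a (Finset.mem_cons_self a s))
        (ih fun i hi => h i (Finset.mem_cons_of_mem hi))

lemma qbF_cong (n k : ℕ) (hk : k ≤ n) :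
    (X : ℚ[X]) ^ (2 * (n - k) + 2) ∣ qb (2 * n) (n + k) * F n - 1 := by
  have hsplit : F n = F (n - k) * ∏ j ∈ Ico (n - k) n, (1 - X ^ (2 * (j + 1))) := by
    rw [F, F, Finset.prod_range_mul_prod_Ico _ (show n - k ≤ n by omega)]
  have hqb : qb (2 * n) (n + k) * F (n - k)
      = ∏ j ∈ Ico (n + k) (2 * n), (1 - X ^ (2 * (j + 1))) := by
    have h := qb_mul_F (n + k) (n - k)
    rwa [show n + k + (n - k) = 2 * n by omega] at h
  rw [hsplit, show qb (2 * n) (n + k) * (F (n - k) * ∏ j ∈ Ico (n - k) n, (1 - X ^ (2 * (j + 1))))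
    = (qb (2 * n) (n + k) * F (n - k)) * ∏ j ∈ Ico (n - k) n, (1 - X ^ (2 * (j + 1))) by ring, hqb]
  refine dvd_sub_one_mul (dvd_sub_one_prod fun j hj => ?_) (dvd_sub_one_prod fun j hj => ?_) <;>
    simp only [mem_Ico] at hj <;>
    · rw [show (1 : ℚ[X]) - X ^ (2 * (j + 1)) - 1 = -(X ^ (2 * (j + 1))) by ring]
      exact (pow_dvd_pow X (by omega)).neg_right

/-- Gauss's identity `φ(-q) = (q;q²)² (q²;q²)`, as a congruence mod `X^(n+1)`. -/
lemma gauss_mod (n : ℕ) :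
    (X : ℚ[X]) ^ (n + 1) ∣ (∏ j ∈ range n, (1 - X ^ (2 * j + 1)) ^ 2) * F n
      - (1 + ∑ k ∈ Icc 1 n, (-1 : ℚ[X]) ^ k * 2 * X ^ (k ^ 2)) := by
  have hsq : (-1 : ℚ[X]) ^ n * (-1) ^ n = 1 := by rw [← mul_pow]; norm_num
  have h0 : (∏ j ∈ range n, (1 - X ^ (2 * j + 1)) ^ 2)
      = (-1 : ℚ[X]) ^ n * ∑ i ∈ range (2 * n + 1), t n i * (-1) ^ i := by
    calc (∏ j ∈ range n, (1 - X ^ (2 * j + 1)) ^ 2)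
        = ((-1 : ℚ[X]) ^ n * (-1) ^ n) * ∏ j ∈ range n, (1 - X ^ (2 * j + 1)) ^ 2 := by
          rw [hsq, one_mul]
      _ = (-1 : ℚ[X]) ^ n * ((-1) ^ n * ∏ j ∈ range n, (1 - X ^ (2 * j + 1)) ^ 2) := by ring
      _ = _ := by rw [jtp_eval]
  have hfold : (∏ j ∈ range n, (1 - X ^ (2 * j + 1)) ^ 2) * F n
      = qb (2 * n) n * F n
        + ∑ k ∈ Icc 1 n, (-1 : ℚ[X]) ^ k * 2 * X ^ (k ^ 2) * (qb (2 * n) (n + k) * F n) := by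
    rw [h0, sum_center n (fun i => t n i * (-1) ^ i)]
    have pull : ∀ g : ℕ → ℚ[X], (-1 : ℚ[X]) ^ n * (∑ k ∈ Icc 1 n, g k) * F n
        = ∑ k ∈ Icc 1 n, (-1 : ℚ[X]) ^ n * g k * F n := fun g => by
      rw [Finset.mul_sum, Finset.sum_mul]
    calc (-1 : ℚ[X]) ^ n * (t n n * (-1) ^ n + (∑ k ∈ Icc 1 n, t n (n - k) * (-1) ^ (n - k))
          + ∑ k ∈ Icc 1 n, t n (n + k) * (-1) ^ (n + k)) * F n
        = (-1 : ℚ[X]) ^ n * (t n n * (-1) ^ n) * F n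
          + ((-1 : ℚ[X]) ^ n * (∑ k ∈ Icc 1 n, t n (n - k) * (-1) ^ (n - k)) * F n
            + (-1 : ℚ[X]) ^ n * (∑ k ∈ Icc 1 n, t n (n + k) * (-1) ^ (n + k)) * F n) := by
          ring
      _ = (-1 : ℚ[X]) ^ n * (t n n * (-1) ^ n) * F n
          + ∑ k ∈ Icc 1 n, ((-1 : ℚ[X]) ^ n * (t n (n - k) * (-1) ^ (n - k)) * F n
            + (-1 : ℚ[X]) ^ n * (t n (n + k) * (-1) ^ (n + k)) * F n) := by
          rw [pull, pull, ← Finset.sum_add_distrib]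
      _ = qb (2 * n) n * F n
          + ∑ k ∈ Icc 1 n, (-1 : ℚ[X]) ^ k * 2 * X ^ (k ^ 2) * (qb (2 * n) (n + k) * F n) := by
          congr 1
          · simp only [t_def, e_nn, pow_zero, mul_one]
            calc (-1:ℚ[X]) ^ n * (qb (2*n) n * (-1) ^ n) * F n
                = ((-1:ℚ[X]) ^ n * (-1) ^ n) * (qb (2*n) n * F n) := by ring
              _ = qb (2 * n) n * F n := by rw [hsq, one_mul]
          · refine Finset.sum_congr rfl fun k hk => ?_
            simp only [mem_Icc] at hk
            have sign1 : (-1 : ℚ[X]) ^ n * (-1) ^ (n + k) = (-1) ^ k := by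
              rw [pow_add, ← mul_assoc, hsq, one_mul]
            have sign2 : (-1 : ℚ[X]) ^ n * (-1) ^ (n - k) = (-1) ^ k := by
              rw [← pow_add, show n + (n - k) = 2 * (n - k) + k by omega, pow_add, pow_mul]
              norm_num
            simp only [t_def, e_sub n k hk.2, e_add, qb_symm' n k hk.2]
            linear_combination (qb (2 * n) (n + k) * X ^ (k ^ 2) * F n) * sign1
              + (qb (2 * n) (n + k) * X ^ (k ^ 2) * F n) * sign2
  rw [hfold]
  have hre : qb (2 * n) n * F n
        + (∑ k ∈ Icc 1 n, (-1 : ℚ[X]) ^ k * 2 * X ^ (k ^ 2) * (qb (2 * n) (n + k) * F n))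
      - (1 + ∑ k ∈ Icc 1 n, (-1 : ℚ[X]) ^ k * 2 * X ^ (k ^ 2))
      = (qb (2 * n) n * F n - 1)
        + ∑ k ∈ Icc 1 n, ((-1 : ℚ[X]) ^ k * 2 * X ^ (k ^ 2) * (qb (2 * n) (n + k) * F n)
            - (-1 : ℚ[X]) ^ k * 2 * X ^ (k ^ 2)) := by
    rw [Finset.sum_sub_distrib]
    ring
  rw [hre]
  refine dvd_add ?_ (Finset.dvd_sum fun k hk => ?_)
  · have h := qbF_cong n 0 (Nat.zero_le n)
    rw [add_zero, Nat.sub_zero] at h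
    exact (pow_dvd_pow X (by omega)).trans h
  · simp only [mem_Icc] at hk
    obtain ⟨d, hd⟩ := qbF_cong n k hk.2
    have hterm : (-1 : ℚ[X]) ^ k * 2 * X ^ (k ^ 2) * (qb (2 * n) (n + k) * F n)
        - (-1 : ℚ[X]) ^ k * 2 * X ^ (k ^ 2)
        = ((-1 : ℚ[X]) ^ k * 2) * ((X ^ (k ^ 2) * X ^ (2 * (n - k) + 2)) * d) := by
      rw [show (X:ℚ[X]) ^ (k ^ 2) * X ^ (2 * (n - k) + 2) * d
        = X ^ (k ^ 2) * (X ^ (2 * (n - k) + 2) * d) by ring, ← hd]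
      ring
    rw [hterm]
    refine Dvd.dvd.mul_left (Dvd.dvd.mul_right ?_ d) _
    rw [← pow_add]
    refine pow_dvd_pow X ?_
    have hk2 := hk.2
    zify [hk2]
    nlinarith [sq_nonneg ((k : ℤ) - 1)]

/-! ### Substitution `X → X⁴` and product rearrangement -/

lemma F_def (a : ℕ) : F a = ∏ j ∈ range a, (1 - X ^ (2 * (j + 1))) := rfl

noncomputable def Θ (n : ℕ) : ℚ[X] :=
  1 + ∑ k ∈ Icc 1 n, (-1 : ℚ[X]) ^ k * 2 * X ^ (4 * k ^ 2)

lemma Θ_def (n : ℕ) : Θ n = 1 + ∑ k ∈ Icc 1 n, (-1 : ℚ[X]) ^ k * 2 * X ^ (4 * k ^ 2) := rfl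

lemma gauss4 (n : ℕ) :
    (X : ℚ[X]) ^ (n + 1) ∣
      (∏ j ∈ range n, (1 - X ^ (8 * j + 4)) ^ 2) * (∏ j ∈ range n, (1 - X ^ (8 * j + 8)))
        - Θ n := by
  have h2 := map_dvd (Polynomial.aeval ((X : ℚ[X]) ^ 4)) (gauss_mod n)
  simp only [F_def, map_sub, map_mul, map_prod, map_pow, map_add, map_one, map_sum,
    Polynomial.aeval_X, map_neg, map_ofNat] at h2
  have e1 : ∀ j : ℕ, ((X : ℚ[X]) ^ 4) ^ (2 * j + 1) = X ^ (8 * j + 4) := fun j => by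
    rw [← pow_mul]; congr 1; ring
  have e2 : ∀ j : ℕ, ((X : ℚ[X]) ^ 4) ^ (2 * (j + 1)) = X ^ (8 * j + 8) := fun j => by
    rw [← pow_mul]; congr 1; ring
  have e3 : ∀ k : ℕ, ((X : ℚ[X]) ^ 4) ^ (k ^ 2) = X ^ (4 * k ^ 2) := fun k => by
    rw [← pow_mul]
  have e4 : ((X : ℚ[X]) ^ 4) ^ (n + 1) = X ^ (4 * (n + 1)) := by rw [← pow_mul]
  simp only [e1, e2, e3, e4] at h2
  rw [Θ_def]
  exact (pow_dvd_pow X (by omega)).trans h2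

lemma mcong_mul {m : ℕ} {a b c d : ℚ[X]} (h1 : (X : ℚ[X]) ^ m ∣ a - b)
    (h2 : (X : ℚ[X]) ^ m ∣ c - d) : (X : ℚ[X]) ^ m ∣ a * c - b * d := by
  have : a * c - b * d = (a - b) * c + b * (c - d) := by ring
  rw [this]
  exact dvd_add (h1.mul_right c) (h2.mul_left b)

lemma factor_cong {m p : ℕ} (hm : m ≤ p) : (X : ℚ[X]) ^ m ∣ (1 - X ^ p) - 1 := by
  rw [show (1 : ℚ[X]) - X ^ p - 1 = -(X ^ p) by ring]
  exact (pow_dvd_pow X hm).neg_right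

lemma trim_prod {m K1 K2 : ℕ} (g : ℕ → ℚ[X]) (hK : K1 ≤ K2)
    (h : ∀ j ∈ Ico K1 K2, (X : ℚ[X]) ^ m ∣ g j - 1) :
    (X : ℚ[X]) ^ m ∣ (∏ j ∈ range K2, g j) - ∏ j ∈ range K1, g j := by
  have he : ∏ j ∈ range K2, g j = (∏ j ∈ range K1, g j) * ∏ j ∈ Ico K1 K2, g j :=
    (Finset.prod_range_mul_prod_Ico g hK).symm
  rw [he, show (∏ j ∈ range K1, g j) * (∏ j ∈ Ico K1 K2, g j) - ∏ j ∈ range K1, g j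
    = (∏ j ∈ range K1, g j) * ((∏ j ∈ Ico K1 K2, g j) - 1) by ring]
  exact Dvd.dvd.mul_left (dvd_sub_one_prod h) _

/-- The sets of allowed parts. -/
def s4 (n : ℕ) : Finset ℕ :=
  ((range (4 * (n + 1))).image fun j => 2 * j + 1) ∪
    ((range (2 * (n + 1))).image fun j => 4 * j + 2)

def sp (n : ℕ) : Finset ℕ :=
  ((range (4 * (n + 1))).image fun j => 2 * j + 1) ∪
    ((range (2 * (n + 1))).image fun j => 4 * j + 4)

lemma mem_s4 (n i : ℕ) : i ∈ s4 n ↔ 1 ≤ i ∧ i ≤ 8 * (n + 1) ∧ ¬ 4 ∣ i := by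
  simp only [s4, Finset.mem_union, Finset.mem_image, Finset.mem_range]
  constructor
  · rintro (⟨j, hj, rfl⟩ | ⟨j, hj, rfl⟩) <;> omega
  · rintro ⟨h1, h2, h3⟩
    by_cases hodd : i % 2 = 1
    · exact Or.inl ⟨i / 2, by omega, by omega⟩
    · exact Or.inr ⟨(i - 2) / 4, by omega, by omega⟩

lemma mem_sp (n i : ℕ) : i ∈ sp n ↔ 1 ≤ i ∧ i ≤ 8 * (n + 1) ∧ i % 4 ≠ 2 := by
  simp only [sp, Finset.mem_union, Finset.mem_image, Finset.mem_range]
  constructor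
  · rintro (⟨j, hj, rfl⟩ | ⟨j, hj, rfl⟩) <;> omega
  · rintro ⟨h1, h2, h3⟩
    by_cases hodd : i % 2 = 1
    · exact Or.inl ⟨i / 2, by omega, by omega⟩
    · exact Or.inr ⟨i / 4 - 1, by omega, by omega⟩

lemma s4_prod (n : ℕ) :
    ∏ i ∈ s4 n, (1 + (X : ℚ[X]) ^ i)
      = (∏ j ∈ range (4 * (n + 1)), (1 + (X : ℚ[X]) ^ (2 * j + 1))) *
        ∏ j ∈ range (2 * (n + 1)), (1 + (X : ℚ[X]) ^ (4 * j + 2)) := by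
  rw [s4, Finset.prod_union, Finset.prod_image, Finset.prod_image]
  · exact fun a _ b _ h => by omega
  · exact fun a _ b _ h => by omega
  · rw [Finset.disjoint_left]
    rintro x hx hy
    simp only [Finset.mem_image, Finset.mem_range] at hx hy
    obtain ⟨a, _, rfl⟩ := hx
    obtain ⟨b, _, hb⟩ := hy
    omega

lemma sp_prod (n : ℕ) :
    ∏ i ∈ sp n, (1 - (X : ℚ[X]) ^ i)
      = (∏ j ∈ range (4 * (n + 1)), (1 - (X : ℚ[X]) ^ (2 * j + 1))) *
        ∏ j ∈ range (2 * (n + 1)), (1 - (X : ℚ[X]) ^ (4 * j + 4)) := by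
  rw [sp, Finset.prod_union, Finset.prod_image, Finset.prod_image]
  · exact fun a _ b _ h => by omega
  · exact fun a _ b _ h => by omega
  · rw [Finset.disjoint_left]
    rintro x hx hy
    simp only [Finset.mem_image, Finset.mem_range] at hx hy
    obtain ⟨a, _, rfl⟩ := hx
    obtain ⟨b, _, hb⟩ := hy
    omega

lemma split_even (P : ℕ) :
    ∏ j ∈ range (2 * P), (1 - (X : ℚ[X]) ^ (4 * j + 4))
      = (∏ j ∈ range P, (1 - (X : ℚ[X]) ^ (8 * j + 4))) *
        ∏ j ∈ range P, (1 - (X : ℚ[X]) ^ (8 * j + 8)) := by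
  induction P with
  | zero => simp
  | succ P ih =>
      rw [show 2 * (P + 1) = (2 * P + 1) + 1 by ring, prod_range_succ, prod_range_succ,
        prod_range_succ, prod_range_succ, ih,
        show 4 * (2 * P + 1) + 4 = 8 * P + 8 by ring, show 4 * (2 * P) + 4 = 8 * P + 4 by ring]
      ring

/-- The main product rearrangement congruence. -/
lemma AB_cong (n : ℕ) :
    (X : ℚ[X]) ^ (n + 1) ∣
      (∏ i ∈ s4 n, (1 + (X : ℚ[X]) ^ i)) * (∏ i ∈ sp n, (1 - (X : ℚ[X]) ^ i)) - Θ n := by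
  have pair1 : (∏ j ∈ range (4 * (n + 1)), (1 + (X : ℚ[X]) ^ (2 * j + 1))) *
      (∏ j ∈ range (4 * (n + 1)), (1 - (X : ℚ[X]) ^ (2 * j + 1)))
      = ∏ j ∈ range (4 * (n + 1)), (1 - (X : ℚ[X]) ^ (4 * j + 2)) := by
    rw [← Finset.prod_mul_distrib]
    refine Finset.prod_congr rfl fun j _ => ?_
    have : ((X : ℚ[X]) ^ (2 * j + 1)) ^ 2 = X ^ (4 * j + 2) := by
      rw [← pow_mul]; congr 1; ring
    linear_combination this
  have pair2 : (∏ j ∈ range (2 * (n + 1)), (1 - (X : ℚ[X]) ^ (4 * j + 2))) *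
      (∏ j ∈ range (2 * (n + 1)), (1 + (X : ℚ[X]) ^ (4 * j + 2)))
      = ∏ j ∈ range (2 * (n + 1)), (1 - (X : ℚ[X]) ^ (8 * j + 4)) := by
    rw [← Finset.prod_mul_distrib]
    refine Finset.prod_congr rfl fun j _ => ?_
    have : ((X : ℚ[X]) ^ (4 * j + 2)) ^ 2 = X ^ (8 * j + 4) := by
      rw [← pow_mul]; congr 1; ring
    linear_combination this
  have step0 : (∏ i ∈ s4 n, (1 + (X : ℚ[X]) ^ i)) * (∏ i ∈ sp n, (1 - (X : ℚ[X]) ^ i))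
      = (∏ j ∈ range (4 * (n + 1)), (1 - (X : ℚ[X]) ^ (4 * j + 2))) *
        ((∏ j ∈ range (2 * (n + 1)), (1 + (X : ℚ[X]) ^ (4 * j + 2))) *
          ∏ j ∈ range (2 * (n + 1)), (1 - (X : ℚ[X]) ^ (4 * j + 4))) := by
    rw [s4_prod, sp_prod, ← pair1]; ring
  rw [step0]
  have hsplit : ∏ j ∈ range (2 * (n + 1)), (1 - (X : ℚ[X]) ^ (4 * j + 4))
      = (∏ j ∈ range (n + 1), (1 - (X : ℚ[X]) ^ (8 * j + 4))) *
        ∏ j ∈ range (n + 1), (1 - (X : ℚ[X]) ^ (8 * j + 8)) := split_even (n + 1)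
  have trim1 : (X : ℚ[X]) ^ (n + 1) ∣
      (∏ j ∈ range (4 * (n + 1)), (1 - (X : ℚ[X]) ^ (4 * j + 2))) -
        ∏ j ∈ range (2 * (n + 1)), (1 - (X : ℚ[X]) ^ (4 * j + 2)) :=
    trim_prod _ (by omega) fun j hj => factor_cong (by simp only [mem_Ico] at hj; omega)
  have trim2 : (X : ℚ[X]) ^ (n + 1) ∣
      (∏ j ∈ range (2 * (n + 1)), (1 - (X : ℚ[X]) ^ (8 * j + 4))) -
        ∏ j ∈ range n, (1 - (X : ℚ[X]) ^ (8 * j + 4)) :=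
    trim_prod _ (by omega) fun j hj => factor_cong (by simp only [mem_Ico] at hj; omega)
  have trim3 : (X : ℚ[X]) ^ (n + 1) ∣
      (∏ j ∈ range (n + 1), (1 - (X : ℚ[X]) ^ (8 * j + 4))) -
        ∏ j ∈ range n, (1 - (X : ℚ[X]) ^ (8 * j + 4)) :=
    trim_prod _ (by omega) fun j hj => factor_cong (by simp only [mem_Ico] at hj; omega)
  have trim4 : (X : ℚ[X]) ^ (n + 1) ∣
      (∏ j ∈ range (n + 1), (1 - (X : ℚ[X]) ^ (8 * j + 8))) -
        ∏ j ∈ range n, (1 - (X : ℚ[X]) ^ (8 * j + 8)) :=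
    trim_prod _ (by omega) fun j hj => factor_cong (by simp only [mem_Ico] at hj; omega)
  have c1 : (X : ℚ[X]) ^ (n + 1) ∣
      (∏ j ∈ range (4 * (n + 1)), (1 - (X : ℚ[X]) ^ (4 * j + 2))) *
        ((∏ j ∈ range (2 * (n + 1)), (1 + (X : ℚ[X]) ^ (4 * j + 2))) *
          ∏ j ∈ range (2 * (n + 1)), (1 - (X : ℚ[X]) ^ (4 * j + 4))) -
      (∏ j ∈ range (2 * (n + 1)), (1 - (X : ℚ[X]) ^ (4 * j + 2))) *
        ((∏ j ∈ range (2 * (n + 1)), (1 + (X : ℚ[X]) ^ (4 * j + 2))) *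
          ∏ j ∈ range (2 * (n + 1)), (1 - (X : ℚ[X]) ^ (4 * j + 4))) := by
    rw [show ∀ a b c : ℚ[X], a * c - b * c = (a - b) * c from fun a b c => by ring]
    exact trim1.mul_right _
  have c2 : (X : ℚ[X]) ^ (n + 1) ∣
      (∏ j ∈ range (2 * (n + 1)), (1 - (X : ℚ[X]) ^ (4 * j + 2))) *
        ((∏ j ∈ range (2 * (n + 1)), (1 + (X : ℚ[X]) ^ (4 * j + 2))) *
          ∏ j ∈ range (2 * (n + 1)), (1 - (X : ℚ[X]) ^ (4 * j + 4))) -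
      (∏ j ∈ range n, (1 - (X : ℚ[X]) ^ (8 * j + 4))) *
        ((∏ j ∈ range n, (1 - (X : ℚ[X]) ^ (8 * j + 4))) *
          ∏ j ∈ range n, (1 - (X : ℚ[X]) ^ (8 * j + 8))) := by
    have hB : (∏ j ∈ range (2 * (n + 1)), (1 - (X : ℚ[X]) ^ (4 * j + 2))) *
        ((∏ j ∈ range (2 * (n + 1)), (1 + (X : ℚ[X]) ^ (4 * j + 2))) *
          ∏ j ∈ range (2 * (n + 1)), (1 - (X : ℚ[X]) ^ (4 * j + 4)))
        = (∏ j ∈ range (2 * (n + 1)), (1 - (X : ℚ[X]) ^ (8 * j + 4))) *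
          ((∏ j ∈ range (n + 1), (1 - (X : ℚ[X]) ^ (8 * j + 4))) *
            ∏ j ∈ range (n + 1), (1 - (X : ℚ[X]) ^ (8 * j + 8))) := by
      rw [← pair2, hsplit]; ring
    rw [hB]
    exact mcong_mul trim2 (mcong_mul trim3 trim4)
  have c3 : (X : ℚ[X]) ^ (n + 1) ∣
      (∏ j ∈ range n, (1 - (X : ℚ[X]) ^ (8 * j + 4))) *
        ((∏ j ∈ range n, (1 - (X : ℚ[X]) ^ (8 * j + 4))) *
          ∏ j ∈ range n, (1 - (X : ℚ[X]) ^ (8 * j + 8))) - Θ n := by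
    have hsq : (∏ j ∈ range n, (1 - (X : ℚ[X]) ^ (8 * j + 4))) *
        ((∏ j ∈ range n, (1 - (X : ℚ[X]) ^ (8 * j + 4))) *
          ∏ j ∈ range n, (1 - (X : ℚ[X]) ^ (8 * j + 8)))
        = (∏ j ∈ range n, (1 - (X : ℚ[X]) ^ (8 * j + 4)) ^ 2) *
          ∏ j ∈ range n, (1 - (X : ℚ[X]) ^ (8 * j + 8)) := by
      have hp : ∏ j ∈ range n, (1 - (X : ℚ[X]) ^ (8 * j + 4)) ^ 2
          = (∏ j ∈ range n, (1 - (X : ℚ[X]) ^ (8 * j + 4))) *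
            ∏ j ∈ range n, (1 - (X : ℚ[X]) ^ (8 * j + 4)) := by
        rw [← Finset.prod_mul_distrib]
        exact Finset.prod_congr rfl fun j _ => sq _
      rw [hp]
      ring
    rw [hsq]
    exact gauss4 n
  have := dvd_add (dvd_add c1 c2) c3
  simpa using this

/-! ### Counting partitions: machinery from the Archive (Euler partition theorem file) -/

open PowerSeries

open scoped Classical

open Finset.HasAntidiagonal

universe u
variable {α : Type*} {ι : Type u}

/-- A convenience constructor for the power series whose coefficients indicate a subset. -/
noncomputable def indicatorSeries (α : Type*) [Semiring α] (s : Set ℕ) : PowerSeries α :=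
  PowerSeries.mk fun n => if n ∈ s then 1 else 0

theorem coeff_indicator (s : Set ℕ) [Semiring α] (n : ℕ) :
    coeff n (indicatorSeries α s) = if n ∈ s then 1 else 0 :=
  coeff_mk _ _

theorem coeff_indicator_pos (s : Set ℕ) [Semiring α] (n : ℕ) (h : n ∈ s) :
    coeff n (indicatorSeries α s) = 1 := by rw [coeff_indicator, if_pos h]

theorem coeff_indicator_neg (s : Set ℕ) [Semiring α] (n : ℕ) (h : n ∉ s) :
    coeff n (indicatorSeries α s) = 0 := by rw [coeff_indicator, if_neg h]

theorem constantCoeff_indicator (s : Set ℕ) [Semiring α] :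
    constantCoeff (indicatorSeries α s) = if 0 ∈ s then 1 else 0 :=
  rfl

theorem two_series (i : ℕ) [Semiring α] :
    1 + (X : PowerSeries α) ^ i.succ = indicatorSeries α {0, i.succ} := by
  ext n
  simp only [coeff_indicator, PowerSeries.coeff_one, PowerSeries.coeff_X_pow, Set.mem_insert_iff, Set.mem_singleton_iff,
    map_add]
  cases' n with d
  · simp [(Nat.succ_ne_zero i).symm]
  · simp [Nat.succ_ne_zero d]

theorem num_series' [Field α] (i : ℕ) :
    (1 - (X : PowerSeries α) ^ (i + 1))⁻¹ = indicatorSeries α {k | i + 1 ∣ k} := by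
  rw [PowerSeries.inv_eq_iff_mul_eq_one]
  · ext n
    cases n with
    | zero => simp [mul_sub, zero_pow, constantCoeff_indicator]
    | succ n =>
      simp only [PowerSeries.coeff_one, if_false, mul_sub, mul_one, coeff_indicator,
        LinearMap.map_sub, reduceCtorEq]
      simp_rw [PowerSeries.coeff_mul, PowerSeries.coeff_X_pow, coeff_indicator, @boole_mul _ _ _ _]
      simp only [Set.mem_setOf_eq]; erw [sum_ite, sum_ite]
      simp_rw [@filter_filter _ _ _ _ _, sum_const_zero, add_zero, sum_const, nsmul_eq_mul, mul_one,
        sub_eq_iff_eq_add, zero_add]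
      symm
      split_ifs with h
      · suffices #{a ∈ antidiagonal (n + 1) | i + 1 ∣ a.fst ∧ a.snd = i + 1} = 1 by
          convert congr_arg ((↑) : ℕ → α) this; norm_cast
        rw [card_eq_one]
        cases' h with p hp
        refine ⟨((i + 1) * (p - 1), i + 1), ?_⟩
        ext ⟨a₁, a₂⟩
        simp only [mem_filter, Prod.mk_inj, HasAntidiagonal.mem_antidiagonal, mem_singleton]
        constructor
        · rintro ⟨a_left, ⟨a, rfl⟩, rfl⟩
          refine ⟨?_, rfl⟩
          rw [Nat.mul_sub_left_distrib, ← hp, ← a_left, mul_one, Nat.add_sub_cancel]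
        · rintro ⟨rfl, rfl⟩
          match p with
          | 0 => rw [mul_zero] at hp; cases hp
          | p + 1 => rw [hp]; simp [mul_add]
      · suffices #{a ∈ antidiagonal (n + 1) | i + 1 ∣ a.fst ∧ a.snd = i + 1} = 0 by
          convert congr_arg ((↑) : ℕ → α) this; norm_cast
        rw [card_eq_zero]
        apply eq_empty_of_forall_notMem
        simp only [Prod.forall, mem_filter, not_and, HasAntidiagonal.mem_antidiagonal]
        rintro _ h₁ h₂ ⟨a, rfl⟩ rfl
        apply h
        simp [← h₂]
  · simp [zero_pow]

-- The main workhorse of the partition theorem proof.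
theorem partialGF_prop (α : Type*) [CommSemiring α] (n : ℕ) (s : Finset ℕ) (hs : ∀ i ∈ s, 0 < i)
    (c : ℕ → Set ℕ) (hc : ∀ i, i ∉ s → 0 ∈ c i) :
    #{p : n.Partition | (∀ j, p.parts.count j ∈ c j) ∧ ∀ j ∈ p.parts, j ∈ s} =
      coeff n (∏ i ∈ s, indicatorSeries α ((· * i) '' c i)) := by
  simp_rw [coeff_prod, coeff_indicator, prod_boole, sum_boole]
  apply congr_arg
  simp only [mem_univ, forall_true_left, not_and, not_forall, exists_prop,
    Set.mem_image, not_exists]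
  set φ : (a : Nat.Partition n) →
    a ∈ filter (fun p ↦ (∀ (j : ℕ), Multiset.count j p.parts ∈ c j) ∧ ∀ j ∈ p.parts, j ∈ s) univ →
    ℕ →₀ ℕ := fun p _ => {
      toFun := fun i => Multiset.count i p.parts • i
      support := Finset.filter (fun i => i ≠ 0) p.parts.toFinset
      mem_support_toFun := fun a => by
        simp only [smul_eq_mul, ne_eq, mul_eq_zero, Multiset.count_eq_zero]
        rw [not_or, not_not]
        simp only [Multiset.mem_toFinset, not_not, mem_filter] }
  refine Finset.card_bij φ ?_ ?_ ?_
  · intro a ha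
    simp only [φ, not_forall, not_exists, not_and, exists_prop, mem_filter]
    rw [mem_finsuppAntidiag]
    dsimp only [ne_eq, smul_eq_mul, id_eq, eq_mpr_eq_cast, le_eq_subset, Finsupp.coe_mk]
    simp only [mem_univ, forall_true_left, not_and, not_forall, exists_prop,
      mem_filter, true_and] at ha
    refine ⟨⟨?_, fun i ↦ ?_⟩, fun i _ ↦ ⟨a.parts.count i, ha.1 i, rfl⟩⟩
    · conv_rhs => simp [← a.parts_sum]
      rw [sum_multiset_count_of_subset _ s]
      · simp only [smul_eq_mul]
      · intro i
        simp only [Multiset.mem_toFinset, not_not, mem_filter]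
        apply ha.2
    · simp only [ne_eq, Multiset.mem_toFinset, not_not, mem_filter, and_imp]
      exact fun hi _ ↦ ha.2 i hi
  · intro p₁ hp₁ p₂ hp₂ h
    apply Nat.Partition.ext
    simp only [true_and, mem_univ, mem_filter] at hp₁ hp₂
    ext i
    simp only [φ, ne_eq, Multiset.mem_toFinset, not_not, smul_eq_mul, Finsupp.mk.injEq] at h
    by_cases hi : i = 0
    · rw [hi]
      rw [Multiset.count_eq_zero_of_notMem]
      · rw [Multiset.count_eq_zero_of_notMem]
        intro a; exact Nat.lt_irrefl 0 (hs 0 (hp₂.2 0 a))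
      intro a; exact Nat.lt_irrefl 0 (hs 0 (hp₁.2 0 a))
    · rw [← mul_left_inj' hi]
      rw [funext_iff] at h
      exact h.2 i
  · simp only [φ, mem_filter, mem_finsuppAntidiag, mem_univ, exists_prop, true_and, and_assoc]
    rintro f ⟨hf, hf₃, hf₄⟩
    have hf' : f ∈ finsuppAntidiag s n := mem_finsuppAntidiag.mpr ⟨hf, hf₃⟩
    simp only [mem_finsuppAntidiag] at hf'
    refine ⟨⟨∑ i ∈ s, Multiset.replicate (f i / i) i, ?_, ?_⟩, ?_, ?_, ?_⟩
    · intro i hi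
      simp only [exists_prop, Multiset.mem_sum, mem_map, Function.Embedding.coeFn_mk] at hi
      rcases hi with ⟨t, ht, z⟩
      apply hs
      rwa [Multiset.eq_of_mem_replicate z]
    · simp_rw [Multiset.sum_sum, Multiset.sum_replicate, Nat.nsmul_eq_mul]
      rw [← hf'.1]
      refine sum_congr rfl fun i hi => Nat.div_mul_cancel ?_
      rcases hf₄ i hi with ⟨w, _, hw₂⟩
      rw [← hw₂]
      exact dvd_mul_left _ _
    · intro i
      simp_rw [Multiset.count_sum', Multiset.count_replicate, sum_ite_eq']
      split_ifs with h
      · rcases hf₄ i h with ⟨w, hw₁, hw₂⟩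
        rwa [← hw₂, Nat.mul_div_cancel _ (hs i h)]
      · exact hc _ h
    · intro i hi
      rw [Multiset.mem_sum] at hi
      rcases hi with ⟨j, hj₁, hj₂⟩
      rwa [Multiset.eq_of_mem_replicate hj₂]
    · ext i
      simp_rw [Multiset.count_sum', Multiset.count_replicate, sum_ite_eq']
      simp only [ne_eq, Multiset.mem_toFinset, not_not, smul_eq_mul, ite_mul,
        zero_mul, Finsupp.coe_mk]
      split_ifs with h
      · apply Nat.div_mul_cancel
        rcases hf₄ i h with ⟨w, _, hw₂⟩
        apply Dvd.intro_left _ hw₂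
      · apply symm
        rw [← Finsupp.notMem_support_iff]
        exact notMem_mono hf'.2 h


/-! ### The counting lemmas -/

lemma parts_le {m : ℕ} (p : m.Partition) {j : ℕ} (hj : j ∈ p.parts) : j ≤ m := by
  simpa [p.parts_sum] using Multiset.single_le_sum (fun _ _ => Nat.zero_le _) _ hj

lemma Q0_coeff (N m : ℕ) (hm : m ≤ 8 * (N + 1)) :
    (Q0 m : ℚ) = PowerSeries.coeff m
      (∏ i ∈ s4 N, (1 + (PowerSeries.X : PowerSeries ℚ) ^ i)) := by
  have hprop := partialGF_prop ℚ m (s4 N) (fun i hi => by rw [mem_s4] at hi; omega)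
    (fun _ => {0, 1}) (fun _ _ => Or.inl rfl)
  have hprod : (∏ i ∈ s4 N, indicatorSeries ℚ ((· * i) '' {0, 1}))
      = ∏ i ∈ s4 N, (1 + (PowerSeries.X : PowerSeries ℚ) ^ i) := by
    refine Finset.prod_congr rfl fun i hi => ?_
    have hi1 : 1 ≤ i := ((mem_s4 N i).mp hi).1
    have h2s := two_series (α := ℚ) (i - 1)
    rw [Nat.succ_eq_add_one, show i - 1 + 1 = i by omega] at h2s
    rw [h2s]
    congr 1
    rw [Set.image_pair]
    simp
  rw [hprod] at hprop
  rw [← hprop]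
  norm_cast
  rw [Q0, Nat.card_eq_fintype_card, Fintype.card_subtype]
  congr 1
  apply Finset.filter_congr
  intro p _
  simp only [Set.mem_insert_iff, Set.mem_singleton_iff]
  constructor
  · rintro ⟨hnd, h4⟩
    refine ⟨fun j => ?_, fun j hj => (mem_s4 N j).mpr
      ⟨p.parts_pos hj, le_trans (parts_le p hj) hm, h4 j hj⟩⟩
    have := Multiset.nodup_iff_count_le_one.mp hnd j
    omega
  · rintro ⟨hcnt, hs⟩
    refine ⟨Multiset.nodup_iff_count_le_one.mpr fun j => ?_,
      fun x hx => ((mem_s4 N x).mp (hs x hx)).2.2⟩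
    have := hcnt j
    omega

lemma pod_coeff (N m : ℕ) (hm : m ≤ 8 * (N + 1)) :
    (pod m : ℚ) = PowerSeries.coeff m
      (∏ i ∈ sp N, (1 - (PowerSeries.X : PowerSeries ℚ) ^ i)⁻¹) := by
  have hprop := partialGF_prop ℚ m (sp N) (fun i hi => by rw [mem_sp] at hi; omega)
    (fun _ => Set.univ) (fun _ _ => trivial)
  have hprod : (∏ i ∈ sp N, indicatorSeries ℚ ((· * i) '' Set.univ))
      = ∏ i ∈ sp N, (1 - (PowerSeries.X : PowerSeries ℚ) ^ i)⁻¹ := by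
    refine Finset.prod_congr rfl fun i hi => ?_
    have hi1 : 1 ≤ i := ((mem_sp N i).mp hi).1
    have hns := num_series' (α := ℚ) (i - 1)
    rw [show i - 1 + 1 = i by omega] at hns
    have hset : ((fun x => x * i) '' Set.univ) = {k | i ∣ k} := by
      ext k
      simp only [Set.image_univ, Set.mem_range, Set.mem_setOf_eq]
      constructor
      · rintro ⟨a, rfl⟩
        exact Dvd.intro_left a rfl
      · rintro ⟨c, rfl⟩
        exact ⟨c, mul_comm c i⟩
    rw [hns, hset]
  rw [hprod] at hprop
  rw [← hprop]
  norm_cast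
  rw [pod, Nat.card_eq_fintype_card, Fintype.card_subtype]
  congr 1
  apply Finset.filter_congr
  intro p _
  simp only [Set.mem_univ, forall_const, true_and]
  constructor
  · intro h4
    exact fun j hj => (mem_sp N j).mpr
      ⟨p.parts_pos hj, le_trans (parts_le p hj) hm, h4 j hj⟩
  · intro hs
    exact fun x hx => ((mem_sp N x).mp (hs x hx)).2.2

end Stmt4

/-! ### Final assembly -/

open Stmt4 PowerSeries in
/-- Terms with `4k² > n` vanish, and any nonzero term has `k ≤ n`, so the infinite
sum `∑_{k=1}^∞` equals the finite sum over `1 ≤ k ≤ n`. -/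
theorem stmt_4 (n : ℕ) :
    (Q0 n : ℤ) = pod n + 2 * ∑ k ∈ Finset.Icc 1 n, (-1 : ℤ) ^ k * (podZ ((n : ℤ) - 4 * k ^ 2) : ℤ) := by
  classical
  -- power series over ℚ
  set Pinv : PowerSeries ℚ := ∏ i ∈ sp n, (1 - (X : PowerSeries ℚ) ^ i)⁻¹ with hPinv
  set Bps : PowerSeries ℚ := ∏ i ∈ sp n, (1 - (X : PowerSeries ℚ) ^ i) with hBps
  set Aps : PowerSeries ℚ := ∏ i ∈ s4 n, (1 + (X : PowerSeries ℚ) ^ i) with hAps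
  set Θps : PowerSeries ℚ :=
    1 + ∑ k ∈ Finset.Icc 1 n, (-1 : PowerSeries ℚ) ^ k * 2 * (X : PowerSeries ℚ) ^ (4 * k ^ 2)
    with hΘps
  -- transfer the polynomial congruence
  have hab := AB_cong n
  rw [Θ_def] at hab
  have hd := map_dvd (Polynomial.coeToPowerSeries.ringHom (R := ℚ)) hab
  simp only [map_sub, map_mul, map_prod, map_pow, map_add, map_one, map_sum, map_neg,
    map_ofNat, Polynomial.coeToPowerSeries.ringHom_apply, Polynomial.coe_X] at hd
  rw [← hBps, ← hAps, ← hΘps] at hd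
  obtain ⟨r, hr⟩ := hd
  -- inverse relation
  have hBP : Bps * Pinv = 1 := by
    rw [hBps, hPinv, ← Finset.prod_mul_distrib]
    rw [Finset.prod_congr rfl fun i hi => PowerSeries.mul_inv_cancel
      (1 - (X : PowerSeries ℚ) ^ i) ?_]
    · exact Finset.prod_const_one
    · have hi1 : 1 ≤ i := ((mem_sp n i).mp hi).1
      simp [zero_pow (by omega : i ≠ 0)]
  have hA_eq : Aps = Θps * Pinv + (X : PowerSeries ℚ) ^ (n + 1) * (r * Pinv) := by
    calc Aps = Aps * (Bps * Pinv) := by rw [hBP, mul_one]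
      _ = (Aps * Bps) * Pinv := by ring
      _ = (Θps + (X : PowerSeries ℚ) ^ (n + 1) * r) * Pinv := by
          rw [show Aps * Bps = Θps + (X : PowerSeries ℚ) ^ (n + 1) * r by
            linear_combination hr]
      _ = _ := by ring
  -- coefficient extraction
  have hzero : coeff n ((X : PowerSeries ℚ) ^ (n + 1) * (r * Pinv)) = 0 := by
    rw [PowerSeries.coeff_X_pow_mul', if_neg (by omega)]
  have hΘexp : coeff n (Θps * Pinv)
      = coeff n Pinv + ∑ k ∈ Finset.Icc 1 n,
          ((-1 : ℚ) ^ k * 2) * (if 4 * k ^ 2 ≤ n then coeff (n - 4 * k ^ 2) Pinv else 0) := by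
    rw [hΘps, add_mul, one_mul, Finset.sum_mul, map_add, map_sum]
    congr 1
    refine Finset.sum_congr rfl fun k _ => ?_
    have hC : ((-1 : PowerSeries ℚ) ^ k * 2) = PowerSeries.C ((-1 : ℚ) ^ k * 2) := by
      rw [map_mul, map_pow, map_neg, map_one, map_ofNat]
    rw [mul_assoc, hC, PowerSeries.coeff_C_mul, PowerSeries.coeff_X_pow_mul']
  have hQ : (Q0 n : ℚ) = (pod n : ℚ) + ∑ k ∈ Finset.Icc 1 n,
      ((-1 : ℚ) ^ k * 2) * (if 4 * k ^ 2 ≤ n then (pod (n - 4 * k ^ 2) : ℚ) else 0) := by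
    rw [Q0_coeff n n (by omega), ← hAps, hA_eq, map_add, hzero, add_zero, hΘexp,
      ← pod_coeff n n (by omega)]
    congr 1
    refine Finset.sum_congr rfl fun k _ => ?_
    rcases le_or_gt (4 * k ^ 2) n with h | h
    · rw [if_pos h, if_pos h, ← pod_coeff n (n - 4 * k ^ 2) (by omega)]
    · rw [if_neg (by omega), if_neg (by omega)]
  -- relate to podZ
  have hpodZ : ∀ k : ℕ, ((podZ ((n : ℤ) - 4 * (k : ℤ) ^ 2) : ℕ) : ℚ)
      = if 4 * k ^ 2 ≤ n then (pod (n - 4 * k ^ 2) : ℚ) else 0 := by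
    intro k
    have hsq : ((k : ℤ)) ^ 2 = ((k ^ 2 : ℕ) : ℤ) := by push_cast; ring
    rcases le_or_gt (4 * k ^ 2) n with h | h
    · have h0 : (0 : ℤ) ≤ (n : ℤ) - 4 * (k : ℤ) ^ 2 := by rw [hsq]; omega
      have ht : ((n : ℤ) - 4 * (k : ℤ) ^ 2).toNat = n - 4 * k ^ 2 := by rw [hsq]; omega
      simp only [podZ, if_pos h0, if_pos h, ht]
    · have h0 : ¬ (0 : ℤ) ≤ (n : ℤ) - 4 * (k : ℤ) ^ 2 := by rw [hsq]; omega
      simp only [podZ, if_neg h0, if_neg (show ¬ 4 * k ^ 2 ≤ n by omega), Nat.cast_zero]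
  have hQ' : (Q0 n : ℚ) = (pod n : ℚ) + 2 * ∑ k ∈ Finset.Icc 1 n,
      (-1 : ℚ) ^ k * ((podZ ((n : ℤ) - 4 * (k : ℤ) ^ 2) : ℕ) : ℚ) := by
    rw [hQ, Finset.mul_sum]
    congr 1
    refine Finset.sum_congr rfl fun k _ => ?_
    rw [hpodZ k]
    ring
  exact_mod_cast hQ'
end

section
/- For every nonnegative integer n, Q_2(n) = \sum_{k=0}^{\infty} (-1)^{k(k+1)/2} pod(n - k(k+1)), where terms with negative argument are zero. -/
/-- `Q2 n`: number of partitions of `n` into distinct parts none ≡ 2 (mod 4). -/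
noncomputable def Q2 (n : ℕ) : ℕ :=
  Nat.card {p : n.Partition // p.parts.Nodup ∧ ∀ x ∈ p.parts, x % 4 ≠ 2}

open PowerSeries

namespace PodAux

noncomputable section

variable {α : Type*}

open Finset

open scoped Classical

/-- The partial product for the generating function for odd partitions.
TODO: As `m` tends to infinity, this converges (in the `X`-adic topology).

If `m` is sufficiently large, the `i`th coefficient gives the number of odd partitions of the
natural number `i`: proved in `oddGF_prop`.
It is stated for an arbitrary field `α`, though it usually suffices to use `ℚ` or `ℝ`.
-/
def partialOddGF (m : ℕ) [Field α] :=
  ∏ i ∈ range m, (1 - (X : PowerSeries α) ^ (2 * i + 1))⁻¹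

/-- The partial product for the generating function for distinct partitions.
TODO: As `m` tends to infinity, this converges (in the `X`-adic topology).

If `m` is sufficiently large, the `i`th coefficient gives the number of distinct partitions of the
natural number `i`: proved in `distinctGF_prop`.
It is stated for an arbitrary commutative semiring `α`, though it usually suffices to use `ℕ`, `ℚ`
or `ℝ`.
-/
def partialDistinctGF (m : ℕ) [CommSemiring α] :=
  ∏ i ∈ range m, (1 + (X : PowerSeries α) ^ (i + 1))

open Finset.HasAntidiagonal

universe u
variable {ι : Type u}

/-- A convenience constructor for the power series whose coefficients indicate a subset. -/
def indicatorSeries (α : Type*) [Semiring α] (s : Set ℕ) : PowerSeries α :=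
  PowerSeries.mk fun n => if n ∈ s then 1 else 0

theorem coeff_indicator (s : Set ℕ) [Semiring α] (n : ℕ) :
    coeff n (indicatorSeries α s) = if n ∈ s then 1 else 0 :=
  coeff_mk _ _

theorem coeff_indicator_pos (s : Set ℕ) [Semiring α] (n : ℕ) (h : n ∈ s) :
    coeff n (indicatorSeries α s) = 1 := by rw [coeff_indicator, if_pos h]

theorem coeff_indicator_neg (s : Set ℕ) [Semiring α] (n : ℕ) (h : n ∉ s) :
    coeff n (indicatorSeries α s) = 0 := by rw [coeff_indicator, if_neg h]

theorem constantCoeff_indicator (s : Set ℕ) [Semiring α] :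
    constantCoeff (indicatorSeries α s) = if 0 ∈ s then 1 else 0 :=
  rfl

theorem two_series (i : ℕ) [Semiring α] :
    1 + (X : PowerSeries α) ^ i.succ = indicatorSeries α {0, i.succ} := by
  ext n
  simp only [coeff_indicator, coeff_one, coeff_X_pow, Set.mem_insert_iff, Set.mem_singleton_iff,
    map_add]
  cases' n with d
  · simp [(Nat.succ_ne_zero i).symm]
  · simp [Nat.succ_ne_zero d]

theorem num_series' [Field α] (i : ℕ) :
    (1 - (X : PowerSeries α) ^ (i + 1))⁻¹ = indicatorSeries α {k | i + 1 ∣ k} := by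
  rw [PowerSeries.inv_eq_iff_mul_eq_one]
  · ext n
    cases n with
    | zero => simp [mul_sub, zero_pow, constantCoeff_indicator]
    | succ n =>
      simp only [coeff_one, if_false, mul_sub, mul_one, coeff_indicator,
        LinearMap.map_sub, reduceCtorEq]
      simp_rw [coeff_mul, coeff_X_pow, coeff_indicator, @boole_mul _ _ _ _]
      rw [@sum_ite _ _ _ _ _ (fun _ => Classical.propDecidable _), sum_ite]
      simp_rw [@filter_filter _ _ _ _ _, sum_const_zero, add_zero, sum_const, nsmul_eq_mul, mul_one,
        sub_eq_iff_eq_add, zero_add]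
      symm
      split_ifs with h
      · suffices #{a ∈ antidiagonal (n + 1) | i + 1 ∣ a.fst ∧ a.snd = i + 1} = 1 by
          simp only [Set.mem_setOf_eq]; convert congr_arg ((↑) : ℕ → α) this; norm_cast
        rw [card_eq_one]
        cases' h with p hp
        refine ⟨((i + 1) * (p - 1), i + 1), ?_⟩
        ext ⟨a₁, a₂⟩
        simp only [mem_filter, Prod.mk.injEq, HasAntidiagonal.mem_antidiagonal, mem_singleton]
        constructor
        · rintro ⟨a_left, ⟨a, rfl⟩, rfl⟩
          refine ⟨?_, rfl⟩
          rw [Nat.mul_sub_left_distrib, ← hp, ← a_left, mul_one, Nat.add_sub_cancel]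
        · rintro ⟨rfl, rfl⟩
          match p with
          | 0 => rw [mul_zero] at hp; cases hp
          | p + 1 => rw [hp]; simp [mul_add]
      · suffices #{a ∈ antidiagonal (n + 1) | i + 1 ∣ a.fst ∧ a.snd = i + 1} = 0 by
          simp only [Set.mem_setOf_eq]; convert congr_arg ((↑) : ℕ → α) this; norm_cast
        rw [card_eq_zero]
        apply eq_empty_of_forall_notMem
        simp only [Prod.forall, mem_filter, not_and, HasAntidiagonal.mem_antidiagonal]
        rintro _ h₁ h₂ ⟨a, rfl⟩ rfl
        apply h
        simp [← h₂]
  · simp [zero_pow]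

def mkOdd : ℕ ↪ ℕ :=
  ⟨fun i => 2 * i + 1, fun x y h => by linarith⟩

-- The main workhorse of the partition theorem proof.
theorem partialGF_prop (α : Type*) [CommSemiring α] (n : ℕ) (s : Finset ℕ) (hs : ∀ i ∈ s, 0 < i)
    (c : ℕ → Set ℕ) (hc : ∀ i, i ∉ s → 0 ∈ c i) :
    #{p : n.Partition | (∀ j, p.parts.count j ∈ c j) ∧ ∀ j ∈ p.parts, j ∈ s} =
      coeff n (∏ i ∈ s, indicatorSeries α ((· * i) '' c i)) := by
  simp_rw [coeff_prod, coeff_indicator, prod_boole, sum_boole]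
  apply congr_arg
  simp only [mem_univ, forall_true_left, not_and, not_forall, exists_prop,
    Set.mem_image, not_exists]
  set φ : (a : Nat.Partition n) →
    a ∈ filter (fun p ↦ (∀ (j : ℕ), Multiset.count j p.parts ∈ c j) ∧ ∀ j ∈ p.parts, j ∈ s) univ →
    ℕ →₀ ℕ := fun p _ => {
      toFun := fun i => Multiset.count i p.parts • i
      support := Finset.filter (fun i => i ≠ 0) p.parts.toFinset
      mem_support_toFun := fun a => by
        simp only [smul_eq_mul, ne_eq, mul_eq_zero, Multiset.count_eq_zero]
        rw [not_or, not_not]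
        simp only [Multiset.mem_toFinset, not_not, mem_filter] }
  refine Finset.card_bij φ ?_ ?_ ?_
  · intro a ha
    simp only [φ, not_forall, not_exists, not_and, exists_prop, mem_filter]
    rw [mem_finsuppAntidiag]
    dsimp only [ne_eq, smul_eq_mul, id_eq, eq_mpr_eq_cast, le_eq_subset, Finsupp.coe_mk]
    simp only [mem_univ, forall_true_left, not_and, not_forall, exists_prop,
      mem_filter, true_and] at ha
    refine ⟨⟨?_, fun i ↦ ?_⟩, fun i _ ↦ ⟨a.parts.count i, ha.1 i, rfl⟩⟩
    · conv_rhs => simp [← a.parts_sum]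
      rw [sum_multiset_count_of_subset _ s]
      · simp only [smul_eq_mul]
      · intro i
        simp only [Multiset.mem_toFinset, not_not, mem_filter]
        apply ha.2
    · simp only [ne_eq, Multiset.mem_toFinset, not_not, mem_filter, and_imp]
      exact fun hi _ ↦ ha.2 i hi
  · intro p₁ hp₁ p₂ hp₂ h
    apply Nat.Partition.ext
    simp only [true_and, mem_univ, mem_filter] at hp₁ hp₂
    ext i
    simp only [φ, ne_eq, Multiset.mem_toFinset, not_not, smul_eq_mul, Finsupp.mk.injEq] at h
    by_cases hi : i = 0
    · rw [hi]
      rw [Multiset.count_eq_zero_of_notMem]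
      · rw [Multiset.count_eq_zero_of_notMem]
        intro a; exact Nat.lt_irrefl 0 (hs 0 (hp₂.2 0 a))
      intro a; exact Nat.lt_irrefl 0 (hs 0 (hp₁.2 0 a))
    · rw [← mul_left_inj' hi]
      rw [funext_iff] at h
      exact h.2 i
  · simp only [φ, mem_filter, mem_finsuppAntidiag, mem_univ, exists_prop, true_and, and_assoc]
    rintro f ⟨hf, hf₃, hf₄⟩
    have hf' : f ∈ finsuppAntidiag s n := mem_finsuppAntidiag.mpr ⟨hf, hf₃⟩
    simp only [mem_finsuppAntidiag] at hf'
    refine ⟨⟨∑ i ∈ s, Multiset.replicate (f i / i) i, ?_, ?_⟩, ?_, ?_, ?_⟩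
    · intro i hi
      simp only [exists_prop, Multiset.mem_sum, mem_map, Function.Embedding.coeFn_mk] at hi
      rcases hi with ⟨t, ht, z⟩
      apply hs
      rwa [Multiset.eq_of_mem_replicate z]
    · simp_rw [Multiset.sum_sum, Multiset.sum_replicate, Nat.nsmul_eq_mul]
      rw [← hf'.1]
      refine sum_congr rfl fun i hi => Nat.div_mul_cancel ?_
      rcases hf₄ i hi with ⟨w, _, hw₂⟩
      rw [← hw₂]
      exact dvd_mul_left _ _
    · intro i
      simp_rw [Multiset.count_sum', Multiset.count_replicate, sum_ite_eq']
      split_ifs with h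
      · rcases hf₄ i h with ⟨w, hw₁, hw₂⟩
        rwa [← hw₂, Nat.mul_div_cancel _ (hs i h)]
      · exact hc _ h
    · intro i hi
      rw [Multiset.mem_sum] at hi
      rcases hi with ⟨j, hj₁, hj₂⟩
      rwa [Multiset.eq_of_mem_replicate hj₂]
    · ext i
      simp_rw [Multiset.count_sum', Multiset.count_replicate, sum_ite_eq']
      simp only [ne_eq, Multiset.mem_toFinset, not_not, smul_eq_mul, ite_mul,
        zero_mul, Finsupp.coe_mk]
      split_ifs with h
      · apply Nat.div_mul_cancel
        rcases hf₄ i h with ⟨w, _, hw₂⟩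
        apply Dvd.intro_left _ hw₂
      · apply symm
        rw [← Finsupp.notMem_support_iff]
        exact notMem_mono hf'.2 h


end
end PodAux
namespace PodAux

noncomputable section

open Finset
open scoped Classical

/-- allowed parts up to `M` -/
def Sset (M : ℕ) : Finset ℕ := (Finset.Icc 1 M).filter (fun i => i % 4 ≠ 2)

lemma mem_Sset {M i : ℕ} : i ∈ Sset M ↔ (1 ≤ i ∧ i ≤ M) ∧ i % 4 ≠ 2 := by
  simp [Sset, Finset.mem_filter, Finset.mem_Icc]

lemma Sset_pos {M : ℕ} : ∀ i ∈ Sset M, 0 < i := fun i hi => (mem_Sset.mp hi).1.1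

lemma parts_mem_Sset {n M : ℕ} (h : n ≤ M) (p : n.Partition) :
    (∀ j ∈ p.parts, j ∈ Sset M) ↔ ∀ j ∈ p.parts, j % 4 ≠ 2 := by
  apply forall₂_congr
  intro i hi
  have h1 : 0 < i := p.parts_pos hi
  have h2 : i ≤ n := by
    simpa [p.parts_sum] using Multiset.single_le_sum (fun _ _ => Nat.zero_le _) _ hi
  rw [mem_Sset]
  exact and_iff_right ⟨h1, h2.trans h⟩

theorem podGF_prop (n M : ℕ) (h : n ≤ M) :
    (pod n : ℚ) = coeff n (∏ i ∈ Sset M, (1 - X ^ i)⁻¹) := by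
  have key := partialGF_prop ℚ n (Sset M) Sset_pos (fun _ => Set.univ) (fun _ _ => trivial)
  have h1 : ∏ i ∈ Sset M, indicatorSeries ℚ ((· * i) '' Set.univ) =
      ∏ i ∈ Sset M, (1 - (X : PowerSeries ℚ) ^ i)⁻¹ := by
    apply Finset.prod_congr rfl
    intro i hi
    obtain ⟨j, rfl⟩ : ∃ j, i = j + 1 := ⟨i - 1, (Nat.succ_pred_eq_of_pos (Sset_pos i hi)).symm⟩
    have hset : ((· * (j + 1)) '' Set.univ) = {k | j + 1 ∣ k} := by
      ext k
      constructor
      · rintro ⟨a, -, rfl⟩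
        exact Dvd.intro_left a rfl
      · rintro ⟨a, rfl⟩
        exact ⟨a, trivial, mul_comm _ _⟩
    rw [hset, num_series']
  rw [h1] at key
  rw [← key]
  norm_cast
  rw [pod, Nat.card_eq_fintype_card, Fintype.card_subtype]
  congr 1
  ext p
  simp only [Finset.mem_filter, Finset.mem_univ, true_and, Set.mem_univ, forall_const]
  exact (parts_mem_Sset h p).symm

theorem Q2GF_prop (n M : ℕ) (h : n ≤ M) :
    (Q2 n : ℚ) = coeff n (∏ i ∈ Sset M, (1 + X ^ i)) := by
  have key := partialGF_prop ℚ n (Sset M) Sset_pos (fun _ => {0, 1}) (fun _ _ => Or.inl rfl)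
  have h1 : ∏ i ∈ Sset M, indicatorSeries ℚ ((· * i) '' {0, 1}) =
      ∏ i ∈ Sset M, (1 + (X : PowerSeries ℚ) ^ i) := by
    apply Finset.prod_congr rfl
    intro i hi
    obtain ⟨j, rfl⟩ : ∃ j, i = j + 1 := ⟨i - 1, (Nat.succ_pred_eq_of_pos (Sset_pos i hi)).symm⟩
    rw [two_series]
    congr 1
    simp [Set.image_pair]
  rw [h1] at key
  rw [← key]
  norm_cast
  rw [Q2, Nat.card_eq_fintype_card, Fintype.card_subtype]
  congr 1
  ext p
  simp only [Finset.mem_filter, Finset.mem_univ, true_and]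
  rw [show (∀ j ∈ p.parts, j ∈ Sset M) ↔ _ from parts_mem_Sset h p]
  constructor
  · rintro ⟨hb, ha⟩
    refine ⟨fun j => ?_, ha⟩
    have := Multiset.nodup_iff_count_le_one.mp hb j
    interval_cases hcc : (Multiset.count j p.parts) <;> simp_all
  · rintro ⟨ha, hb⟩
    refine ⟨Multiset.nodup_iff_count_le_one.mpr fun a => ?_, hb⟩
    have := ha a
    simp only [Set.mem_insert_iff, Set.mem_singleton_iff] at this
    omega
end
end PodAux
namespace PodAux

noncomputable section

open Finset
open scoped Classical

/-- constant coefficient of `1 - X^j` for `j ≥ 1` is 1 -/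
lemma cc_one_sub_X_pow (j : ℕ) (hj : 0 < j) :
    constantCoeff (1 - X ^ j : PowerSeries ℚ) = 1 := by
  rw [map_sub, map_pow, constantCoeff_one, constantCoeff_X, zero_pow hj.ne', sub_zero]

/-- `F K = ∏_{i=1}^{K} (1 - X^{8i})`, the Euler-type product in base `q = X^8`. -/
def F (K : ℕ) : PowerSeries ℚ := ∏ i ∈ range K, (1 - X ^ (8 * i + 8))

lemma cc_F (K : ℕ) : constantCoeff (F K) = 1 := by
  rw [F, map_prod]
  rw [Finset.prod_eq_one]
  intro i _
  exact cc_one_sub_X_pow _ (by omega)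

lemma F_ne_zero (K : ℕ) : F K ≠ 0 := fun h => by simpa [h] using cc_F K

lemma F_mul_inv (K : ℕ) : F K * (F K)⁻¹ = 1 :=
  PowerSeries.mul_inv_cancel _ (by rw [cc_F]; norm_num)

lemma F_inv_mul (K : ℕ) : (F K)⁻¹ * F K = 1 :=
  PowerSeries.inv_mul_cancel _ (by rw [cc_F]; norm_num)

lemma F_succ (K : ℕ) : F (K + 1) = F K * (1 - X ^ (8 * K + 8)) := by
  rw [F, F, Finset.prod_range_succ]

/-- ratio of two F's is a genuine product -/
lemma F_ratio {a b : ℕ} (h : a ≤ b) :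
    F b * (F a)⁻¹ = ∏ i ∈ Ico a b, (1 - X ^ (8 * i + 8)) := by
  have hsplit : F a * ∏ i ∈ Ico a b, (1 - X ^ (8 * i + 8)) = F b := by
    simp only [F, range_eq_Ico]
    exact Finset.prod_Ico_consecutive _ (Nat.zero_le a) h
  calc F b * (F a)⁻¹ = (F a * ∏ i ∈ Ico a b, (1 - X ^ (8 * i + 8))) * (F a)⁻¹ := by rw [hsplit]
    _ = (F a * (F a)⁻¹) * ∏ i ∈ Ico a b, (1 - X ^ (8 * i + 8)) := by ring
    _ = ∏ i ∈ Ico a b, (1 - X ^ (8 * i + 8)) := by rw [F_mul_inv, one_mul]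

/-- `A K = ∏_{i=1}^{K} (1 - X^{8i-6})(1 - X^{8i-2})`. -/
def A (K : ℕ) : PowerSeries ℚ := ∏ i ∈ range K, ((1 - X ^ (8 * i + 2)) * (1 - X ^ (8 * i + 6)))

lemma A_succ (K : ℕ) :
    A (K + 1) = A K * ((1 - X ^ (8 * K + 2)) * (1 - X ^ (8 * K + 6))) := by
  rw [A, A, Finset.prod_range_succ]

/-- splitting the squared-part product over `Sset (4K)` -/
lemma prod_Sset_split (K : ℕ) :
    ∏ i ∈ Sset (4 * K), (1 - (X : PowerSeries ℚ) ^ (2 * i)) = A K * F K := by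
  induction K with
  | zero =>
    have : Sset 0 = ∅ := by
      ext i; simp only [mem_Sset, Finset.notMem_empty, iff_false]; omega
    simp [this, A, F]
  | succ K ih =>
    have hset : Sset (4 * (K + 1)) =
        insert (4 * K + 1) (insert (4 * K + 3) (insert (4 * K + 4) (Sset (4 * K)))) := by
      ext i
      simp only [mem_Sset, Finset.mem_insert]
      omega
    rw [hset]
    rw [Finset.prod_insert (by simp only [Finset.mem_insert, mem_Sset]; omega),
      Finset.prod_insert (by simp only [Finset.mem_insert, mem_Sset]; omega),
      Finset.prod_insert (by simp only [mem_Sset]; omega), ih, A_succ, F_succ]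
    have e1 : 2 * (4 * K + 1) = 8 * K + 2 := by ring
    have e2 : 2 * (4 * K + 3) = 8 * K + 6 := by ring
    have e3 : 2 * (4 * K + 4) = 8 * K + 8 := by ring
    rw [e1, e2, e3]
    ring

/-- The key factorization: distinct GF = pod GF times the "theta product". -/
lemma Q2GF_factor (K : ℕ) :
    ∏ i ∈ Sset (4 * K), (1 + (X : PowerSeries ℚ) ^ i) =
      (∏ i ∈ Sset (4 * K), (1 - X ^ i)⁻¹) * (A K * F K) := by
  rw [← prod_Sset_split K, ← Finset.prod_mul_distrib]
  apply Finset.prod_congr rfl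
  intro i hi
  have hipos : 0 < i := Sset_pos i hi
  have key : (1 - (X : PowerSeries ℚ) ^ (2 * i)) = (1 - X ^ i) * (1 + X ^ i) := by
    have : 2 * i = i + i := by ring
    rw [this, pow_add]
    ring
  rw [key]
  calc (1 + (X : PowerSeries ℚ) ^ i)
      = ((1 - X ^ i)⁻¹ * (1 - X ^ i)) * (1 + X ^ i) := by
        rw [PowerSeries.inv_mul_cancel _ (by rw [cc_one_sub_X_pow i hipos]; norm_num), one_mul]
    _ = (1 - X ^ i)⁻¹ * ((1 - X ^ i) * (1 + X ^ i)) := by ring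

end
end PodAux
namespace PodAux

noncomputable section

open Finset
open scoped Classical

/-- sign `(-1)^t` for integer `t` -/
def sg (t : ℤ) : ℚ := if Even t then 1 else -1

lemma sg_add_one (t : ℤ) : sg (t + 1) = -sg t := by
  simp only [sg, Int.even_add_one]
  by_cases h : Even t <;> simp [h]

lemma sg_sub_one (t : ℤ) : sg (t - 1) = -sg t := by
  have := sg_add_one (t - 1)
  rw [sub_add_cancel] at this
  rw [this]; ring

/-- `X^t` for an integer `t`, junk value `1` on negatives -/
def Xz (a : ℤ) : PowerSeries ℚ := X ^ a.toNat

lemma Xz_add {a b : ℤ} (ha : 0 ≤ a) (hb : 0 ≤ b) : Xz (a + b) = Xz a * Xz b := by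
  rw [Xz, Xz, Xz, Int.toNat_add ha hb, pow_add]

lemma Xz_coe (c : ℕ) : Xz (c : ℤ) = X ^ c := by rw [Xz, Int.toNat_natCast]

lemma Xz_zero : Xz 0 = 1 := by rw [show ((0:ℤ) = ((0:ℕ):ℤ)) from rfl, Xz_coe, pow_zero]

/-- Gaussian binomial in base `q = X^8`, as a power series, zero outside `0 ≤ k ≤ m`. -/
def Cg (m : ℕ) (k : ℤ) : PowerSeries ℚ :=
  if 0 ≤ k ∧ k ≤ m then F m * (F k.toNat)⁻¹ * (F (m - k.toNat))⁻¹ else 0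

lemma Cg_of_neg {m : ℕ} {k : ℤ} (h : k < 0) : Cg m k = 0 := by
  rw [Cg, if_neg]; omega

lemma Cg_of_gt {m : ℕ} {k : ℤ} (h : (m : ℤ) < k) : Cg m k = 0 := by
  rw [Cg, if_neg]; omega

lemma Cg_nat (m a : ℕ) (h : a ≤ m) :
    Cg m (a : ℤ) = F m * (F a)⁻¹ * (F (m - a))⁻¹ := by
  rw [Cg, if_pos (by constructor <;> omega), Int.toNat_natCast]

lemma F_zero : F 0 = 1 := by rw [F, Finset.prod_range_zero]

lemma one_inv' : (1 : PowerSeries ℚ)⁻¹ = 1 := by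
  have := PowerSeries.mul_inv_cancel (1 : PowerSeries ℚ) (by simp)
  simpa using this

lemma Cg_zero (m : ℕ) : Cg m 0 = 1 := by
  rw [show (0:ℤ) = ((0:ℕ):ℤ) from rfl, Cg_nat m 0 (Nat.zero_le m)]
  rw [F_zero, one_inv', Nat.sub_zero, mul_one, F_mul_inv]

lemma Cg_top (m : ℕ) : Cg m m = 1 := by
  rw [Cg_nat m m le_rfl, Nat.sub_self, F_zero, one_inv', mul_one, F_mul_inv]

lemma Cg_symm (m : ℕ) (k : ℤ) : Cg m k = Cg m ((m : ℤ) - k) := by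
  rcases lt_trichotomy k 0 with h | h | h
  · rw [Cg_of_neg h, Cg_of_gt (by omega)]
  · subst h; rw [Cg_zero, sub_zero, show ((m:ℤ) = ((m:ℕ):ℤ)) from rfl, Cg_top]
  · rcases le_or_gt k m with h2 | h2
    · obtain ⟨a, rfl⟩ : ∃ a : ℕ, k = (a : ℤ) := ⟨k.toNat, by omega⟩
      have ha : a ≤ m := by exact_mod_cast h2
      rw [show ((m:ℤ) - a) = ((m - a : ℕ) : ℤ) by omega]
      rw [Cg_nat m a ha, Cg_nat m (m - a) (by omega)]
      rw [show m - (m - a) = a by omega]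
      ring
    · rw [Cg_of_gt h2, Cg_of_neg (by omega)]

/-- interior Pascal identity, numerator form -/
lemma pascal_core (m a : ℕ) (h1 : 1 ≤ a) (h2 : a ≤ m) :
    F (m+1) * (F a)⁻¹ * (F (m+1-a))⁻¹ =
      F m * (F a)⁻¹ * (F (m-a))⁻¹ +
        X ^ (8*(m+1-a)) * (F m * (F (a-1))⁻¹ * (F (m+1-a))⁻¹) := by
  have hFa : F a = F (a-1) * (1 - X ^ (8*(a-1)+8)) := by
    conv_lhs => rw [show a = (a-1)+1 by omega]
    rw [F_succ]
  have hFm1a : F (m+1-a) = F (m-a) * (1 - X ^ (8*(m-a)+8)) := by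
    rw [show m+1-a = (m-a)+1 by omega, F_succ]
  have hFm1 : F (m+1) = F m * (1 - X ^ (8*m+8)) := F_succ m
  have e1 : 8*(m-a)+8 = 8*(m+1-a) := by omega
  have hkey : (1 - X ^ (8*m+8) : PowerSeries ℚ) =
      (1 - X ^ (8*(m-a)+8)) + X ^ (8*(m+1-a)) * (1 - X ^ (8*(a-1)+8)) := by
    rw [e1, mul_one_sub, ← pow_add, show 8*(m+1-a) + (8*(a-1)+8) = 8*m+8 by omega]
    ring
  -- cancellation setup
  have ccu : constantCoeff (F (a-1)) = 1 := cc_F _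
  have ccv : constantCoeff (F (m-a)) = 1 := cc_F _
  have ccf : constantCoeff (1 - X ^ (8*(a-1)+8) : PowerSeries ℚ) = 1 :=
    cc_one_sub_X_pow _ (by omega)
  have ccg : constantCoeff (1 - X ^ (8*(m-a)+8) : PowerSeries ℚ) = 1 :=
    cc_one_sub_X_pow _ (by omega)
  set u := F (a-1) with hu
  set v := F (m-a) with hv
  set f := (1 - X ^ (8*(a-1)+8) : PowerSeries ℚ) with hf
  set g := (1 - X ^ (8*(m-a)+8) : PowerSeries ℚ) with hg
  have hw : (u * f * (v * g)) ≠ 0 := by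
    intro h
    have : constantCoeff (u * f * (v * g)) = 1 := by
      rw [map_mul, map_mul, map_mul, ccu, ccv, ccf, ccg]; norm_num
    rw [h] at this
    simp at this
  apply mul_right_cancel₀ hw
  have hufi : (u * f)⁻¹ * (u * f) = 1 :=
    PowerSeries.inv_mul_cancel _ (by rw [map_mul, ccu, ccf]; norm_num)
  have hvgi : (v * g)⁻¹ * (v * g) = 1 :=
    PowerSeries.inv_mul_cancel _ (by rw [map_mul, ccv, ccg]; norm_num)
  have hui : u⁻¹ * u = 1 := F_inv_mul _
  have hvi : v⁻¹ * v = 1 := F_inv_mul _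
  have LHS : F (m+1) * (F a)⁻¹ * (F (m+1-a))⁻¹ * (u * f * (v * g)) = F m * (1 - X ^ (8*m+8)) := by
    rw [hFm1, hFa, hFm1a]
    calc F m * (1 - X ^ (8*m+8)) * (u * f)⁻¹ * (v * g)⁻¹ * (u * f * (v * g))
        = F m * (1 - X ^ (8*m+8)) * ((u * f)⁻¹ * (u * f)) * ((v * g)⁻¹ * (v * g)) := by ring
      _ = F m * (1 - X ^ (8*m+8)) := by rw [hufi, hvgi]; ring
  have RHS : (F m * (F a)⁻¹ * (F (m-a))⁻¹ +
        X ^ (8*(m+1-a)) * (F m * (F (a-1))⁻¹ * (F (m+1-a))⁻¹)) * (u * f * (v * g)) =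
      F m * (1 - X ^ (8*m+8)) := by
    rw [hFa, hFm1a]
    calc (F m * (u * f)⁻¹ * v⁻¹ + X ^ (8*(m+1-a)) * (F m * u⁻¹ * (v * g)⁻¹)) * (u * f * (v * g))
        = F m * ((u * f)⁻¹ * (u * f)) * (v⁻¹ * v) * g
          + X ^ (8*(m+1-a)) * (F m * (u⁻¹ * u) * ((v * g)⁻¹ * (v * g)) * f) := by ring
      _ = F m * g + X ^ (8*(m+1-a)) * (F m * f) := by rw [hufi, hvgi, hui, hvi]; ring
      _ = F m * (g + X ^ (8*(m+1-a)) * f) := by ring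
      _ = F m * (1 - X ^ (8*m+8)) := by rw [← hkey]
  rw [LHS, RHS]

/-- Pascal rule I, valid for all integers `k`. -/
lemma pascal1 (m : ℕ) (k : ℤ) :
    Cg (m+1) k = Cg m k + Xz (8*((m:ℤ)+1-k)) * Cg m (k-1) := by
  rcases lt_trichotomy k 0 with h | h | h
  · rw [Cg_of_neg h, Cg_of_neg h, Cg_of_neg (by omega)]; ring
  · subst h
    rw [Cg_zero, Cg_zero, Cg_of_neg (by omega)]; ring
  · rcases lt_trichotomy ((m:ℤ)+1) k with h2 | h2 | h2
    · rw [Cg_of_gt (by exact_mod_cast h2), Cg_of_gt (by omega), Cg_of_gt (by omega)]; ring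
    · -- k = m+1
      rw [← h2]
      rw [show ((m:ℤ)+1) = ((m+1 : ℕ):ℤ) by push_cast; ring, Cg_top]
      rw [Cg_of_gt (by push_cast; omega)]
      rw [show ((m+1:ℕ):ℤ) - 1 = ((m:ℕ):ℤ) by push_cast; ring, Cg_top]
      rw [show (8*(((m+1:ℕ):ℤ) - ((m+1:ℕ):ℤ))) = 0 by ring, Xz_zero]
      ring
    · -- 1 ≤ k ≤ m
      obtain ⟨a, rfl⟩ : ∃ a : ℕ, k = (a : ℤ) := ⟨k.toNat, by omega⟩
      have h1 : 1 ≤ a := by exact_mod_cast h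
      have h2' : a ≤ m := by omega
      rw [Cg_nat (m+1) a (by omega), Cg_nat m a h2']
      rw [show ((a:ℤ) - 1) = ((a - 1 : ℕ):ℤ) by omega, Cg_nat m (a-1) (by omega)]
      rw [show (8*((m:ℤ)+1-(a:ℤ))) = ((8*(m+1-a) : ℕ) : ℤ) by push_cast [Nat.cast_sub (by omega : a ≤ m+1)]; ring, Xz_coe]
      rw [show m - (a-1) = m+1-a by omega]
      exact pascal_core m a h1 h2'

/-- Pascal rule II, valid for all integers `k`. -/
lemma pascal2 (m : ℕ) (k : ℤ) :
    Cg (m+1) k = Cg m (k-1) + Xz (8*k) * Cg m k := by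
  have hs := Cg_symm (m+1) k
  rw [hs, show (((m+1:ℕ)):ℤ) - k = ((m:ℤ)+1-k) by push_cast; ring, pascal1 m ((m:ℤ)+1-k)]
  rw [show (8*((m:ℤ)+1-((m:ℤ)+1-k))) = 8*k by ring]
  rw [show ((m:ℤ)+1-k-1) = (m:ℤ) - k by ring, ← Cg_symm m k]
  rw [show ((m:ℤ)+1-k) = (m:ℤ) - (k-1) by ring, ← Cg_symm m (k-1)]

end
end PodAux
namespace PodAux

noncomputable section

open Finset
open scoped Classical

/-- summand of the theta sum -/
def Jf (n : ℕ) (t : ℤ) : PowerSeries ℚ :=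
  C (sg t) * (Xz (4*t^2 + 2*t) * Cg (2*n) ((n:ℤ) + t))

def E2f (n : ℕ) (t : ℤ) : PowerSeries ℚ :=
  C (sg t) * (Xz (4*t^2 + 2*t) * (Xz (8*((n:ℤ)+1-t)) * Cg (2*n) ((n:ℤ)+t-1)))

def E3f (n : ℕ) (t : ℤ) : PowerSeries ℚ :=
  C (sg t) * (Xz (4*t^2 + 2*t) * (Xz (8*((n:ℤ)+1+t)) * Cg (2*n) ((n:ℤ)+1+t)))

def E4f (n : ℕ) (t : ℤ) : PowerSeries ℚ :=
  C (sg t) * (Xz (4*t^2 + 2*t) * (Xz (8*((n:ℤ)+1+t)) * (Xz (8*((n:ℤ)-t)) * Cg (2*n) ((n:ℤ)+t))))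

lemma Cg_out {n : ℕ} {k : ℤ} (h1 : k < 0 ∨ (2*n : ℤ) < k) : Cg (2*n) k = 0 := by
  rcases h1 with h | h
  · exact Cg_of_neg h
  · exact Cg_of_gt (by push_cast; omega)

lemma Jf_eq_zero {n : ℕ} {t : ℤ} (h : t < -(n:ℤ) ∨ (n:ℤ) < t) : Jf n t = 0 := by
  rw [Jf, Cg_out (by omega)]
  simp

/-- sum over any window containing `Icc (-n) n` is the same -/
lemma Jf_sum_window {n : ℕ} {W : Finset ℤ} (hW : Icc (-(n:ℤ)) n ⊆ W) :
    ∑ t ∈ W, Jf n t = ∑ t ∈ Icc (-(n:ℤ)) n, Jf n t := by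
  refine (Finset.sum_subset hW (fun t _ ht => Jf_eq_zero ?_)).symm
  rw [Finset.mem_Icc] at ht
  omega

lemma exp_nonneg (t : ℤ) : 0 ≤ 4*t^2 + 2*t := by nlinarith [sq_nonneg t, sq_nonneg (t+1)]

lemma sum_eq_of_support {f : ℤ → PowerSeries ℚ} {a b : ℤ} {W₁ W₂ : Finset ℤ}
    (h1 : Icc a b ⊆ W₁) (h2 : Icc a b ⊆ W₂)
    (hf : ∀ t, t ∉ Icc a b → f t = 0) :
    ∑ t ∈ W₁, f t = ∑ t ∈ W₂, f t := by
  rw [← Finset.sum_subset h1 (fun t _ ht => hf t ht),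
    ← Finset.sum_subset h2 (fun t _ ht => hf t ht)]

/-- The finite Jacobi-triple-product-type identity. -/
theorem jtp (n : ℕ) : A n = ∑ t ∈ Icc (-(n:ℤ)) n, Jf n t := by
  induction n with
  | zero =>
    rw [show ((0:ℕ):ℤ) = 0 by norm_num, neg_zero, Icc_self, Finset.sum_singleton, Jf]
    norm_num [Cg_zero, sg, Xz_zero, A]
  | succ n ih =>
    have hc : ((n+1:ℕ):ℤ) = (n:ℤ)+1 := by push_cast; ring
    have hsplit : ∀ t : ℤ, Jf (n+1) t = Jf n t + E2f n t + E3f n t + E4f n t := by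
      intro t
      rw [Jf, hc, show 2*(n+1) = (2*n+1)+1 by ring]
      rw [pascal2 (2*n+1) ((n:ℤ)+1+t)]
      rw [show ((n:ℤ)+1+t-1) = (n:ℤ)+t by ring]
      rw [pascal1 (2*n) ((n:ℤ)+t), pascal1 (2*n) ((n:ℤ)+1+t)]
      rw [show (8*(((2*n:ℕ):ℤ)+1-((n:ℤ)+t))) = 8*((n:ℤ)+1-t) by push_cast; ring]
      rw [show (8*(((2*n:ℕ):ℤ)+1-((n:ℤ)+1+t))) = 8*((n:ℤ)-t) by push_cast; ring]
      rw [show ((n:ℤ)+1+t-1) = (n:ℤ)+t by ring]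
      rw [Jf, E2f, E3f, E4f]
      ring
    have hE4eq : ∀ t : ℤ, E4f n t = X ^ (16*n+8) * Jf n t := by
      intro t
      by_cases ht : -(n:ℤ) ≤ t ∧ t ≤ n
      · rw [E4f, Jf]
        rw [show (Xz (8*((n:ℤ)+1+t)) * (Xz (8*((n:ℤ)-t)) * Cg (2*n) ((n:ℤ)+t))) =
            (Xz (8*((n:ℤ)+1+t)) * Xz (8*((n:ℤ)-t))) * Cg (2*n) ((n:ℤ)+t) by ring]
        rw [← Xz_add (by omega) (by omega)]
        rw [show (8*((n:ℤ)+1+t) + 8*((n:ℤ)-t)) = ((16*n+8 : ℕ) : ℤ) by push_cast; ring, Xz_coe]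
        ring
      · rw [E4f, Jf, Cg_out (by omega)]
        simp
    have hE2shift : ∀ t : ℤ, E2f n (t+1) = -(X ^ (8*n+6) * Jf n t) := by
      intro t
      by_cases ht : -(n:ℤ) ≤ t ∧ t ≤ n
      · rw [E2f, Jf]
        rw [show ((n:ℤ)+1-(t+1)) = (n:ℤ)-t by ring, show ((n:ℤ)+(t+1)-1) = (n:ℤ)+t by ring]
        rw [show (Xz (4*(t+1)^2 + 2*(t+1)) * (Xz (8*((n:ℤ)-t)) * Cg (2*n) ((n:ℤ)+t))) =
            (Xz (4*(t+1)^2 + 2*(t+1)) * Xz (8*((n:ℤ)-t))) * Cg (2*n) ((n:ℤ)+t) by ring]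
        rw [← Xz_add (exp_nonneg (t+1)) (by omega)]
        rw [show (4*(t+1)^2 + 2*(t+1) + 8*((n:ℤ)-t)) = (4*t^2+2*t) + ((8*n+6 : ℕ) : ℤ) by
          push_cast; ring]
        rw [Xz_add (exp_nonneg t) (by exact_mod_cast Int.natCast_nonneg _), Xz_coe, sg_add_one,
          map_neg]
        ring
      · rw [E2f, Jf, show ((n:ℤ)+(t+1)-1) = (n:ℤ)+t by ring, Cg_out (by omega)]
        simp
    have hE3shift : ∀ t : ℤ, E3f n (t-1) = -(X ^ (8*n+2) * Jf n t) := by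
      intro t
      by_cases ht : -(n:ℤ) ≤ t ∧ t ≤ n
      · rw [E3f, Jf]
        rw [show ((n:ℤ)+1+(t-1)) = (n:ℤ)+t by ring]
        rw [show (Xz (4*(t-1)^2 + 2*(t-1)) * (Xz (8*((n:ℤ)+t)) * Cg (2*n) ((n:ℤ)+t))) =
            (Xz (4*(t-1)^2 + 2*(t-1)) * Xz (8*((n:ℤ)+t))) * Cg (2*n) ((n:ℤ)+t) by ring]
        rw [← Xz_add (exp_nonneg (t-1)) (by omega)]
        rw [show (4*(t-1)^2 + 2*(t-1) + 8*((n:ℤ)+t)) = (4*t^2+2*t) + ((8*n+2 : ℕ) : ℤ) by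
          push_cast; ring]
        rw [Xz_add (exp_nonneg t) (by exact_mod_cast Int.natCast_nonneg _), Xz_coe, sg_sub_one,
          map_neg]
        ring
      · rw [E3f, Jf, show ((n:ℤ)+1+(t-1)) = (n:ℤ)+t by ring, Cg_out (by omega)]
        simp
    set V : Finset ℤ := Icc (-(n:ℤ)-3) ((n:ℤ)+3) with hV
    rw [hc]
    have step1 : ∑ t ∈ Icc (-((n:ℤ)+1)) ((n:ℤ)+1), Jf (n+1) t = ∑ t ∈ V, Jf (n+1) t := by
      apply Finset.sum_subset
      · intro t ht
        rw [Finset.mem_Icc] at ht ⊢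
        omega
      · intro t _ ht
        apply Jf_eq_zero
        rw [Finset.mem_Icc] at ht
        push_cast
        omega
    have step2 : ∑ t ∈ V, Jf (n+1) t =
        (∑ t ∈ V, Jf n t) + (∑ t ∈ V, E2f n t) + (∑ t ∈ V, E3f n t) + (∑ t ∈ V, E4f n t) := by
      rw [← Finset.sum_add_distrib, ← Finset.sum_add_distrib, ← Finset.sum_add_distrib]
      exact Finset.sum_congr rfl (fun t _ => hsplit t)
    have hE2supp : ∀ t : ℤ, t < -(n:ℤ)+1 ∨ (n:ℤ)+1 < t → E2f n t = 0 := by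
      intro t ht
      rw [E2f, Cg_out (by omega)]
      simp
    have step3 : ∑ t ∈ V, E2f n t = ∑ t ∈ V, (-(X ^ (8*n+6) * Jf n t)) := by
      have h1 : ∑ t ∈ V, E2f n t = ∑ t ∈ Icc (-(n:ℤ)-2) ((n:ℤ)+4), E2f n t := by
        rw [hV]
        refine sum_eq_of_support (a := -(n:ℤ)+1) (b := (n:ℤ)+1) ?_ ?_ ?_
        · intro t ht; rw [Finset.mem_Icc] at ht ⊢; omega
        · intro t ht; rw [Finset.mem_Icc] at ht ⊢; omega
        · intro t ht
          rw [Finset.mem_Icc] at ht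
          exact hE2supp t (by omega)
      have h2 : Icc (-(n:ℤ)-2) ((n:ℤ)+4) = (Icc (-(n:ℤ)-3) ((n:ℤ)+3)).map
          (addRightEmbedding 1) := by
        rw [Finset.map_add_right_Icc]
        congr 1 <;> ring
      rw [h1, h2, Finset.sum_map]
      apply Finset.sum_congr rfl
      intro t _
      exact hE2shift t
    have hE3supp : ∀ t : ℤ, t < -(n:ℤ)-1 ∨ (n:ℤ)-1 < t → E3f n t = 0 := by
      intro t ht
      rw [E3f, Cg_out (by omega)]
      simp
    have step4 : ∑ t ∈ V, E3f n t = ∑ t ∈ V, (-(X ^ (8*n+2) * Jf n t)) := by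
      have h1 : ∑ t ∈ V, E3f n t = ∑ t ∈ Icc (-(n:ℤ)-4) ((n:ℤ)+2), E3f n t := by
        rw [hV]
        refine sum_eq_of_support (a := -(n:ℤ)-1) (b := (n:ℤ)-1) ?_ ?_ ?_
        · intro t ht; rw [Finset.mem_Icc] at ht ⊢; omega
        · intro t ht; rw [Finset.mem_Icc] at ht ⊢; omega
        · intro t ht
          rw [Finset.mem_Icc] at ht
          exact hE3supp t (by omega)
      have h2 : Icc (-(n:ℤ)-4) ((n:ℤ)+2) = (Icc (-(n:ℤ)-3) ((n:ℤ)+3)).map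
          (addRightEmbedding (-1)) := by
        rw [Finset.map_add_right_Icc]
        congr 1 <;> ring
      rw [h1, h2, Finset.sum_map]
      apply Finset.sum_congr rfl
      intro t _
      have := hE3shift t
      rw [show t - 1 = addRightEmbedding (-1) t by simp [addRightEmbedding, sub_eq_add_neg]] at this
      exact this
    have hsumJf : ∑ t ∈ V, Jf n t = A n := by
      rw [Jf_sum_window (by intro t ht; rw [Finset.mem_Icc] at ht ⊢; omega), ← ih]
    rw [step1, step2, step3, step4]
    have e4 : ∑ t ∈ V, E4f n t = X ^ (16*n+8) * A n := by
      rw [← hsumJf, Finset.mul_sum]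
      exact Finset.sum_congr rfl (fun t _ => hE4eq t)
    have e2 : ∑ t ∈ V, (-(X ^ (8*n+6) * Jf n t)) = -(X ^ (8*n+6) * A n) := by
      rw [← hsumJf, Finset.mul_sum, ← Finset.sum_neg_distrib]
    have e3 : ∑ t ∈ V, (-(X ^ (8*n+2) * Jf n t)) = -(X ^ (8*n+2) * A n) := by
      rw [← hsumJf, Finset.mul_sum, ← Finset.sum_neg_distrib]
    rw [hsumJf, e2, e3, e4, A_succ]
    rw [show (16*n+8) = (8*n+2) + (8*n+6) by ring, pow_add]
    ring

end
end PodAux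
namespace PodAux

noncomputable section

open Finset
open scoped Classical

lemma dvd_prod_sub_one (s : Finset ℕ) (g : ℕ → ℕ) (d : ℕ) (hg : ∀ i ∈ s, d ≤ g i) :
    (X : PowerSeries ℚ) ^ d ∣ ((∏ i ∈ s, (1 - X ^ (g i))) - 1) := by
  induction s using Finset.induction with
  | empty => simp
  | insert a s' hna ih =>
    rw [Finset.prod_insert hna]
    have h1 : (X : PowerSeries ℚ)^d ∣ ((∏ i ∈ s', (1 - X ^ (g i))) - 1) :=
      ih (fun i hi => hg i (Finset.mem_insert_of_mem hi))
    have h2 : (X : PowerSeries ℚ)^d ∣ X ^ (g a) :=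
      pow_dvd_pow _ (hg a (Finset.mem_insert_self a s'))
    have key : (1 - (X : PowerSeries ℚ) ^ (g a)) * (∏ i ∈ s', (1 - (X : PowerSeries ℚ) ^ (g i))) - 1 =
        ((∏ i ∈ s', (1 - (X : PowerSeries ℚ) ^ (g i))) - 1) -
          (X : PowerSeries ℚ) ^ (g a) * (∏ i ∈ s', (1 - (X : PowerSeries ℚ) ^ (g i))) := by ring
    rw [key]
    exact dvd_sub h1 (Dvd.dvd.mul_right h2 _)

lemma dvd_mul_sub_one {P Q : PowerSeries ℚ} {d : ℕ}
    (hP : (X : PowerSeries ℚ)^d ∣ P - 1) (hQ : (X : PowerSeries ℚ)^d ∣ Q - 1) :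
    (X : PowerSeries ℚ)^d ∣ P * Q - 1 := by
  have key : P * Q - 1 = (P - 1) * Q + (Q - 1) := by ring
  rw [key]
  exact dvd_add (hP.mul_right _) hQ

/-- main congruence: `F K * Cg (2K) (K+t) ≡ 1` modulo a high power of `X`. -/
lemma FCg_congr (K : ℕ) (t : ℤ) (ht : t.natAbs ≤ K) :
    (X : PowerSeries ℚ) ^ (8*(K - t.natAbs) + 8) ∣ (F K * Cg (2*K) ((K:ℤ)+t) - 1) := by
  set a := t.natAbs with ha
  set c := K - a with hc
  set b := K + a with hb
  have hCg : Cg (2*K) ((K:ℤ)+t) = F (2*K) * (F b)⁻¹ * (F c)⁻¹ := by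
    rcases le_or_gt 0 t with h | h
    · have htn : ((K:ℤ)+t).toNat = b := by omega
      rw [Cg, if_pos (by constructor <;> omega), htn, show 2*K - b = c by omega]
    · have htn : ((K:ℤ)+t).toNat = c := by omega
      rw [Cg, if_pos (by constructor <;> omega), htn, show 2*K - c = b by omega]
      ring
  have key : F K * Cg (2*K) ((K:ℤ)+t) = (F K * (F c)⁻¹) * (F (2*K) * (F b)⁻¹) := by
    rw [hCg]; ring
  rw [key, F_ratio (show c ≤ K by omega), F_ratio (show b ≤ 2*K by omega)]
  apply dvd_mul_sub_one
  · apply dvd_prod_sub_one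
    intro i hi
    rw [Finset.mem_Ico] at hi
    omega
  · apply dvd_prod_sub_one
    intro i hi
    rw [Finset.mem_Ico] at hi
    omega

lemma coeff_zero_of_dvd {Z : PowerSeries ℚ} {d c : ℕ} (h : (X : PowerSeries ℚ)^d ∣ Z)
    (hc : c < d) : coeff c Z = 0 := by
  exact PowerSeries.X_pow_dvd_iff.mp h c hc

/-- per-term coefficient extraction -/
lemma coeff_term (n : ℕ) (t : ℤ) (ht : t ∈ Icc (-((n:ℤ)+1)) ((n:ℤ)+1)) :
    coeff n ((∏ i ∈ Sset (4*(n+1)), (1 - X ^ i)⁻¹) * F (n+1) * Jf (n+1) t) =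
      sg t * (podZ ((n:ℤ) - (4*t^2+2*t)) : ℚ) := by
  set K := n + 1 with hK
  set pg : PowerSeries ℚ := ∏ i ∈ Sset (4*K), (1 - X ^ i)⁻¹ with hpg
  rw [Finset.mem_Icc] at ht
  have htK : t.natAbs ≤ K := by omega
  set e : ℤ := 4*t^2+2*t with he
  have he0 : 0 ≤ e := exp_nonneg t
  have hXz : Xz e = X ^ e.toNat := rfl
  have hform : pg * F K * Jf K t =
      C (sg t) * ((pg * (F K * Cg (2*K) ((K:ℤ)+t))) * X ^ e.toNat) := by
    rw [Jf, hXz]; ring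
  rw [hform, PowerSeries.coeff_C_mul, PowerSeries.coeff_mul_X_pow']
  rcases le_or_gt e.toNat n with hle | hgt
  · rw [if_pos hle]
    -- split off the 1
    have hsplit : pg * (F K * Cg (2*K) ((K:ℤ)+t)) =
        pg + pg * (F K * Cg (2*K) ((K:ℤ)+t) - 1) := by ring
    rw [hsplit, map_add]
    have hz : coeff (n - e.toNat) (pg * (F K * Cg (2*K) ((K:ℤ)+t) - 1)) = 0 := by
      apply coeff_zero_of_dvd (Dvd.dvd.mul_left (FCg_congr K t htK) pg)
      -- n - e.toNat < 8*(K - t.natAbs) + 8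
      have hee : 4*(t.natAbs:ℤ)^2 ≤ 2*(t.natAbs:ℤ) + e := by
        rw [he]
        rcases le_or_gt 0 t with h | h
        · have h' : (t.natAbs:ℤ) = t := by omega
          rw [h']; nlinarith
        · have h' : (t.natAbs:ℤ) = -t := by omega
          rw [h']; nlinarith
      have hen : (e.toNat : ℤ) = e := Int.toNat_of_nonneg he0
      have hen2 : e ≤ (n:ℤ) := by rw [← hen]; exact_mod_cast hle
      have h8 : 8*(t.natAbs) ≤ 7*n + 15 := by
        have h1 : 4*(t.natAbs:ℤ)^2 ≤ 2*(t.natAbs:ℤ) + n := le_trans hee (by linarith)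
        have h2 : (0:ℤ) ≤ (t.natAbs:ℤ) := Int.natCast_nonneg _
        have h3 : 8*((t.natAbs:ℤ)) ≤ 7*(n:ℤ) + 15 := by
          nlinarith [sq_nonneg ((t.natAbs:ℤ) - 2)]
        exact_mod_cast h3
      omega
    rw [hz, add_zero]
    -- identify with pod
    have hen' : (e.toNat : ℤ) = e := Int.toNat_of_nonneg he0
    rw [← podGF_prop (n - e.toNat) (4*K) (by omega)]
    rw [podZ, if_pos (by omega)]
    rw [show ((n:ℤ) - e).toNat = n - e.toNat by omega]
  · rw [if_neg (by omega)]
    rw [podZ, if_neg (by omega)]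
    norm_num

/-- Master identity in bilateral form. -/
theorem main_bilateral (n : ℕ) :
    (Q2 n : ℚ) = ∑ t ∈ Icc (-((n:ℤ)+1)) ((n:ℤ)+1),
      sg t * (podZ ((n:ℤ) - (4*t^2+2*t)) : ℚ) := by
  set K := n + 1 with hK
  have h1 := Q2GF_prop n (4*K) (by omega)
  rw [Q2GF_factor K, jtp K] at h1
  have h2 : (∏ i ∈ Sset (4*K), ((1 : PowerSeries ℚ) - X ^ i)⁻¹) *
      ((∑ t ∈ Icc (-(K:ℤ)) (K:ℤ), Jf K t) * F K) =
      ∑ t ∈ Icc (-(K:ℤ)) (K:ℤ),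
        (∏ i ∈ Sset (4*K), ((1 : PowerSeries ℚ) - X ^ i)⁻¹) * F K * Jf K t := by
    rw [Finset.sum_mul, Finset.mul_sum]
    exact Finset.sum_congr rfl (fun t _ => by ring)
  rw [h2, map_sum] at h1
  rw [h1]
  apply Finset.sum_congr
  · congr 1 <;> push_cast <;> ring
  · intro t ht
    apply coeff_term
    rw [Finset.mem_Icc] at ht ⊢
    push_cast at ht ⊢
    omega

end
end PodAux
namespace PodAux

noncomputable section

open Finset
open scoped Classical

lemma sg_eval {m : ℕ} {t : ℤ} (h : Even m ↔ Even t) : ((-1 : ℚ)) ^ m = sg t := by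
  rw [sg]
  by_cases he : Even t
  · rw [if_pos he, Even.neg_one_pow (h.mpr he)]
  · rw [if_neg he, Odd.neg_one_pow (Nat.odd_iff.mpr (by
      rw [← Nat.not_even_iff]
      exact fun hc => he (h.mp hc)))]

theorem main_q (n : ℕ) :
    (Q2 n : ℚ) = ∑ k ∈ range (n + 1),
      (-1 : ℚ) ^ (k * (k + 1) / 2) * (podZ ((n : ℤ) - k * (k + 1)) : ℚ) := by
  rw [main_bilateral n]
  -- shrink both sums to the part where podZ is nonzero
  rw [← Finset.sum_filter_of_ne (s := Icc (-((n:ℤ)+1)) ((n:ℤ)+1))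
    (p := fun t => 4*t^2+2*t ≤ (n:ℤ)) (fun t _ hne => by
      by_contra hgt
      apply hne
      rw [podZ, if_neg (by omega)]
      norm_num)]
  rw [← Finset.sum_filter_of_ne (s := range (n+1))
    (p := fun k => (k:ℤ)*((k:ℤ)+1) ≤ (n:ℤ)) (fun k _ hne => by
      by_contra hgt
      apply hne
      rw [podZ, if_neg (by push_cast; push_cast at hgt; omega)]
      norm_num)]
  apply Finset.sum_nbij' (i := fun t : ℤ => if 0 ≤ t then (2*t).toNat else (-2*t-1).toNat)
    (j := fun k : ℕ => if Even k then ((k/2 : ℕ) : ℤ) else -(((k+1)/2 : ℕ) : ℤ))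
  · -- hi : maps into k-filter
    intro t ht
    rw [Finset.mem_filter, Finset.mem_Icc] at ht
    obtain ⟨⟨hl, hr⟩, hle⟩ := ht
    rw [Finset.mem_filter, Finset.mem_range]
    rcases le_or_gt 0 t with h | h
    · rw [if_pos h]
      have he : ((2*t).toNat : ℤ) = 2*t := by omega
      constructor
      · -- 2t ≤ n
        have h2 : 2*t ≤ 4*t^2+2*t := by nlinarith
        omega
      · push_cast [he]
        nlinarith
    · rw [if_neg (by omega)]
      have he : ((-2*t-1).toNat : ℤ) = -2*t-1 := by omega
      have hkk : (-2*t-1)*((-2*t-1)+1) = 4*t^2+2*t := by ring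
      constructor
      · have h2 : -2*t-1 ≤ (-2*t-1)*((-2*t-1)+1) := by nlinarith
        omega
      · push_cast [he]
        omega
  · -- hj : maps into t-filter
    intro k hk
    rw [Finset.mem_filter, Finset.mem_range] at hk
    obtain ⟨hkn, hle⟩ := hk
    rw [Finset.mem_filter, Finset.mem_Icc]
    by_cases he : Even k
    · rw [if_pos he]
      obtain ⟨a, rfl⟩ := he
      have h2 : (a+a)/2 = a := by omega
      rw [h2]
      constructor
      · constructor <;> push_cast <;> omega
      · push_cast
        push_cast at hle
        nlinarith
    · rw [if_neg he]
      obtain ⟨a, rfl⟩ := Nat.odd_iff.mpr (Nat.not_even_iff.mp he)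
      have h2 : (2*a+1+1)/2 = a+1 := by omega
      rw [h2]
      constructor
      · constructor <;> push_cast <;> omega
      · push_cast
        push_cast at hle
        nlinarith
  · -- left inverse
    intro t ht
    rcases le_or_gt 0 t with h | h
    · have h1 : (if 0 ≤ t then (2*t).toNat else (-2*t-1).toNat) = (2*t).toNat := if_pos h
      rw [h1, if_pos (show Even ((2*t).toNat) by rw [Nat.even_iff]; omega)]
      omega
    · have h1 : (if 0 ≤ t then (2*t).toNat else (-2*t-1).toNat) = (-2*t-1).toNat :=
        if_neg (by omega)
      rw [h1, if_neg (show ¬ Even ((-2*t-1).toNat) by rw [Nat.even_iff]; omega)]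
      omega
  · -- right inverse
    intro k hk
    by_cases he : Even k
    · rw [if_pos he]
      obtain ⟨a, rfl⟩ := he
      rw [if_pos (by positivity)]
      omega
    · rw [if_neg he]
      obtain ⟨a, rfl⟩ := Nat.odd_iff.mpr (Nat.not_even_iff.mp he)
      rw [if_neg (by omega)]
      omega
  · -- values agree
    intro t ht
    rw [Finset.mem_filter, Finset.mem_Icc] at ht
    rcases le_or_gt 0 t with h | h
    · rw [if_pos h]
      obtain ⟨a, rfl⟩ : ∃ a : ℕ, t = (a : ℤ) := ⟨t.toNat, by omega⟩
      have h1 : ((2*(a:ℤ)).toNat) = 2*a := by omega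
      rw [h1]
      have h2 : 2*a*(2*a+1)/2 = a*(2*a+1) := by
        rw [show 2*a*(2*a+1) = a*(2*a+1)*2 by ring, Nat.mul_div_cancel _ (by norm_num)]
      rw [h2]
      have h3 : ((2*a : ℕ):ℤ) * (((2*a : ℕ):ℤ)+1) = 4*(a:ℤ)^2+2*(a:ℤ) := by push_cast; ring
      rw [h3]
      congr 1
      refine (sg_eval ?_).symm
      rw [Nat.even_mul, Int.even_coe_nat]
      have : ¬ Even (2*a+1) := by rw [Nat.even_iff]; omega
      tauto
    · rw [if_neg (by omega)]
      obtain ⟨a, rfl⟩ : ∃ a : ℕ, t = -((a : ℤ)+1) := ⟨(-t-1).toNat, by omega⟩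
      have h1 : ((-2*(-((a:ℤ)+1))-1).toNat) = 2*a+1 := by omega
      rw [h1]
      have h2 : (2*a+1)*(2*a+1+1)/2 = (2*a+1)*(a+1) := by
        rw [show (2*a+1)*(2*a+1+1) = (2*a+1)*(a+1)*2 by ring, Nat.mul_div_cancel _ (by norm_num)]
      rw [h2]
      have h3 : ((2*a+1 : ℕ):ℤ) * (((2*a+1 : ℕ):ℤ)+1) = 4*(-((a:ℤ)+1))^2+2*(-((a:ℤ)+1)) := by
        push_cast; ring
      rw [h3]
      congr 1
      refine (sg_eval ?_).symm
      rw [Nat.even_mul]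
      have h4 : ¬ Even (2*a+1) := by rw [Nat.even_iff]; omega
      have h5 : Even (-((a:ℤ)+1)) ↔ Even (a+1) := by
        rw [even_neg, show ((a:ℤ)+1) = ((a+1 : ℕ):ℤ) by push_cast; ring, Int.even_coe_nat]
      rw [h5]
      tauto

end
end PodAux

/-- Terms with `k(k+1) > n` vanish, and any nonzero term has `k ≤ n`, so the infinite
sum `∑_{k=0}^∞` equals the finite sum over `0 ≤ k ≤ n`. -/
theorem stmt_5 (n : ℕ) :
    (Q2 n : ℤ) =
      ∑ k ∈ Finset.range (n + 1), (-1 : ℤ) ^ (k * (k + 1) / 2) * (podZ ((n : ℤ) - k * (k + 1)) : ℤ) := by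
  have h := PodAux.main_q n
  have : ((Q2 n : ℤ) : ℚ) = ((∑ k ∈ Finset.range (n + 1),
      (-1 : ℤ) ^ (k * (k + 1) / 2) * (podZ ((n : ℤ) - k * (k + 1)) : ℤ) : ℤ) : ℚ) := by
    push_cast
    rw [h]
  exact_mod_cast this
end

section
/- As formal power series, (-q;q^4)_\infty(-q^2;q^4)_\infty(-q^3;q^4)_\infty \cdot (q^2;q^2)_\infty/(-q;q^2)_\infty = 1 + 2\sum_{n=1}^{\infty}(-1)^n q^{4n^2}. -/
open scoped Classical

/-- Formal infinite product `∏_{k=0}^∞ f k` of power series, for families where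
`f k ≡ 1 (mod q^{k+1})` (as for all q-Pochhammer factors below): the coefficient of `q^n`
is then the (stable) coefficient of `q^n` in any partial product `∏_{k≤N} f k` with `N ≥ n`. -/
noncomputable def infProd (f : ℕ → PowerSeries ℚ) : PowerSeries ℚ :=
  PowerSeries.mk fun n => PowerSeries.coeff (R := ℚ) n (∏ k ∈ Finset.range (n + 1), f k)

/-- `(-q;q⁴)_∞` -/
noncomputable def P1 : PowerSeries ℚ :=
  infProd fun k => 1 + (PowerSeries.X : PowerSeries ℚ) ^ (4 * k + 1)
/-- `(-q²;q⁴)_∞` -/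
noncomputable def P2 : PowerSeries ℚ :=
  infProd fun k => 1 + (PowerSeries.X : PowerSeries ℚ) ^ (4 * k + 2)
/-- `(-q³;q⁴)_∞` -/
noncomputable def P3 : PowerSeries ℚ :=
  infProd fun k => 1 + (PowerSeries.X : PowerSeries ℚ) ^ (4 * k + 3)
/-- `(q²;q²)_∞` -/
noncomputable def P4 : PowerSeries ℚ :=
  infProd fun k => 1 - (PowerSeries.X : PowerSeries ℚ) ^ (2 * k + 2)
/-- `(-q;q²)_∞` -/
noncomputable def P5 : PowerSeries ℚ :=
  infProd fun k => 1 + (PowerSeries.X : PowerSeries ℚ) ^ (2 * k + 1)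

/-- The right-hand side `1 + 2∑_{n≥1} (-1)^n q^{4n²}`: its `q^n`-coefficient is `1` for
`n = 0`, `2(-1)^m` when `n = 4m²` with `m > 0`, and `0` otherwise. -/
noncomputable def RHS : PowerSeries ℚ :=
  PowerSeries.mk fun n =>
    if n = 0 then 1
    else if ∃ m : ℕ, 0 < m ∧ n = 4 * m ^ 2 then (-1) ^ Nat.sqrt (n / 4) * 2 else 0

def Ecg (n : ℕ) (f g : PowerSeries ℚ) : Prop :=
  ∀ d ≤ n, PowerSeries.coeff (R := ℚ) d f = PowerSeries.coeff (R := ℚ) d g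

lemma Ecg.refl (n f) : Ecg n f f := fun _ _ => rfl
lemma Ecg.symm {n f g} (h : Ecg n f g) : Ecg n g f := fun d hd => (h d hd).symm
lemma Ecg.trans {n f g h} (h1 : Ecg n f g) (h2 : Ecg n g h) : Ecg n f h :=
  fun d hd => (h1 d hd).trans (h2 d hd)

lemma Ecg.mul {n f g f' g'} (hf : Ecg n f f') (hg : Ecg n g g') :
    Ecg n (f * g) (f' * g') := by
  intro d hd
  rw [PowerSeries.coeff_mul, PowerSeries.coeff_mul]
  refine Finset.sum_congr rfl fun p hp => ?_
  rw [Finset.HasAntidiagonal.mem_antidiagonal] at hp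
  rw [hf p.1 (le_trans (le_of_add_le_left hp.le) hd),
      hg p.2 (le_trans (le_of_add_le_right hp.le) hd)]

lemma Ecg_one_add (n m : ℕ) (hm : n < m) (c : ℚ) :
    Ecg n (1 + PowerSeries.C (R := ℚ) c * PowerSeries.X ^ m) 1 := by
  intro d hd
  rw [map_add]
  rw [PowerSeries.coeff_C_mul, PowerSeries.coeff_X_pow]
  rw [if_neg (by omega), mul_zero, add_zero]

lemma Ecg_prod_one {n : ℕ} {s : Finset ℕ} {f : ℕ → PowerSeries ℚ}
    (h : ∀ k ∈ s, Ecg n (f k) 1) : Ecg n (∏ k ∈ s, f k) 1 := by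
  classical
  induction s using Finset.induction with
  | empty => simpa using Ecg.refl n 1
  | insert _ _ hx ih =>
    rename_i a s
    rw [Finset.prod_insert hx]
    have := (h a (Finset.mem_insert_self a s)).mul
      (ih (fun k hk => h k (Finset.mem_insert_of_mem hk)))
    simpa using this

lemma Ecg_prod_range_tail {n K M : ℕ} {f : ℕ → PowerSeries ℚ} (hKM : K ≤ M)
    (h : ∀ k, K ≤ k → Ecg n (f k) 1) :
    Ecg n (∏ k ∈ Finset.range M, f k) (∏ k ∈ Finset.range K, f k) := by
  obtain ⟨t, rfl⟩ := Nat.exists_eq_add_of_le hKM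
  rw [Finset.prod_range_add]
  have h2 : Ecg n (∏ k ∈ Finset.range t, f (K + k)) 1 :=
    Ecg_prod_one (fun k _ => h _ (Nat.le_add_right K k))
  have := (Ecg.refl n (∏ k ∈ Finset.range K, f k)).mul h2
  simpa using this

/-- Gaussian binomial coefficient in base `c = X^8`. -/
noncomputable def gb : ℕ → ℕ → PowerSeries ℚ
  | _, 0 => 1
  | 0, _+1 => 0
  | m+1, k+1 => gb m k + PowerSeries.X ^ (8*(k+1)) * gb m (k+1)

@[simp] lemma gb_zero_right (m : ℕ) : gb m 0 = 1 := by cases m <;> rfl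

@[simp] lemma gb_zero_succ (k : ℕ) : gb 0 (k+1) = 0 := rfl

lemma gb_succ_succ (m k : ℕ) :
    gb (m+1) (k+1) = gb m k + PowerSeries.X ^ (8*(k+1)) * gb m (k+1) := rfl

lemma gb_eq_zero : ∀ m k, m < k → gb m k = 0 := by
  intro m
  induction m with
  | zero => intro k hk; cases k with
    | zero => omega
    | succ k => rfl
  | succ m ih =>
    intro k hk
    cases k with
    | zero => omega
    | succ k =>
      rw [gb_succ_succ, ih k (by omega), ih (k+1) (by omega), mul_zero, add_zero]

@[simp] lemma gb_diag : ∀ m, gb m m = 1 := by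
  intro m
  induction m with
  | zero => rfl
  | succ m ih =>
    rw [gb_succ_succ, ih, gb_eq_zero m (m+1) (by omega), mul_zero, add_zero]

/-- second Pascal rule -/
lemma gb_pascal2 : ∀ k a, gb (a+k+1) (k+1)
    = PowerSeries.X ^ (8*a) * gb (a+k) k + gb (a+k) (k+1) := by
  intro k
  induction k with
  | zero =>
    intro a
    induction a with
    | zero => simp [gb_succ_succ]
    | succ a iha =>
      rw [show a+1+0+1 = (a+1)+1 by ring, show a+1+0 = a+1 by ring]
      rw [show a+0+1 = a+1 by ring, show a+0 = a by ring] at iha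
      have h1 : gb (a+1+1) (0+1) = gb (a+1) 0 + PowerSeries.X ^ (8*(0+1)) * gb (a+1) 1 :=
        gb_succ_succ (a+1) 0
      have h2 : gb (a+1) (0+1) = gb a 0 + PowerSeries.X ^ (8*(0+1)) * gb a 1 :=
        gb_succ_succ a 0
      simp only [gb_zero_right] at h1 h2 iha ⊢
      linear_combination h1 + (PowerSeries.X:PowerSeries ℚ)^(8*(0+1)) * iha - h2
  | succ k ihk =>
    intro a
    induction a with
    | zero =>
      simp only [Nat.zero_add, zero_add, mul_zero, pow_zero, one_mul]
      rw [gb_diag, gb_eq_zero (k+1) (k+2) (by omega), add_zero, gb_diag]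
    | succ a iha =>
      rw [show a+1+(k+1)+1 = (a+k+2)+1 by ring, show a+1+(k+1) = a+k+2 by ring,
          show k+1+1 = (k+1)+1 by ring]
      rw [show a+(k+1)+1 = (a+k+1)+1 by ring, show a+(k+1) = a+k+1 by ring,
          show k+1+1 = (k+1)+1 by ring] at iha
      have L : gb ((a+k+2)+1) ((k+1)+1)
          = gb (a+k+2) (k+1) + PowerSeries.X ^ (8*(k+1+1)) * gb (a+k+2) (k+1+1) :=
        gb_succ_succ (a+k+2) (k+1)
      have hout : gb (a+k+2) (k+1)
          = PowerSeries.X ^ (8*(a+1)) * gb (a+k+1) k + gb (a+k+1) (k+1) := by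
        have := ihk (a+1); rw [show a+1+k+1 = a+k+2 by ring, show a+1+k = a+k+1 by ring] at this
        exact this
      have hp1 : gb (a+k+2) (k+1) = gb (a+k+1) k
          + PowerSeries.X ^ (8*(k+1)) * gb (a+k+1) (k+1) := by
        have := gb_succ_succ (a+k+1) k; rw [show a+k+1+1 = a+k+2 by ring] at this
        exact this
      have hp2 : gb (a+k+2) (k+1+1) = gb (a+k+1) (k+1)
          + PowerSeries.X ^ (8*(k+1+1)) * gb (a+k+1) (k+1+1) := by
        have := gb_succ_succ (a+k+1) (k+1); rw [show a+k+1+1 = a+k+2 by ring] at this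
        exact this
      linear_combination L + hout + (PowerSeries.X:PowerSeries ℚ)^(8*(k+1+1)) * iha
        - (PowerSeries.X:PowerSeries ℚ)^(8*(a+1)) * hp1 - hp2

/-- symmetry -/
lemma gb_symm : ∀ a k, gb (a+k) k = gb (a+k) a := by
  intro a
  induction a with
  | zero => intro k; simp
  | succ a iha =>
    intro k
    induction k with
    | zero => simp
    | succ k ihk =>
      have e1 : gb (a+1+(k+1)) (k+1)
          = PowerSeries.X ^ (8*(a+1)) * gb (a+k+1) k + gb (a+k+1) (k+1) := by
        have := gb_pascal2 k (a+1)
        rw [show a+1+k+1 = a+1+(k+1) by ring, show a+1+k = a+k+1 by ring] at this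
        exact this
      have e2 : gb (a+1+(k+1)) (a+1)
          = gb (a+k+1) a + PowerSeries.X ^ (8*(a+1)) * gb (a+k+1) (a+1) := by
        have := gb_succ_succ (a+k+1) a
        rw [show a+k+1+1 = a+1+(k+1) by ring] at this
        exact this
      have s1 : gb (a+k+1) k = gb (a+k+1) (a+1) := by
        have := ihk; rw [show a+1+k = a+k+1 by ring] at this; exact this
      have s2 : gb (a+k+1) (k+1) = gb (a+k+1) a := by
        have := iha (k+1); rw [show a+(k+1) = a+k+1 by ring] at this; exact this
      linear_combination e1 - e2 + (PowerSeries.X:PowerSeries ℚ)^(8*(a+1)) * s1 + s2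

/-- `(c^{a+1}; c)_b` with `c = X^8`. -/
noncomputable def pd (a b : ℕ) : PowerSeries ℚ :=
  ∏ i ∈ Finset.range b, (1 - PowerSeries.X ^ (8*(a+1+i)))

@[simp] lemma pd_zero (a : ℕ) : pd a 0 = 1 := by simp [pd]

lemma pd_succ (a b : ℕ) : pd a (b+1) = pd a b * (1 - PowerSeries.X ^ (8*(a+1+b))) := by
  rw [pd, Finset.prod_range_succ]; rfl

lemma pd_add (a b t : ℕ) : pd a (b+t) = pd a b * pd (a+b) t := by
  induction t with
  | zero => simp
  | succ t ih =>
    rw [show b+(t+1) = (b+t)+1 by ring, pd_succ, ih, pd_succ, mul_assoc]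
    congr 3
    ring

lemma pd_cons (a b : ℕ) : pd a (b+1) = (1 - PowerSeries.X ^ (8*(a+1))) * pd (a+1) b := by
  rw [show b+1 = 1+b by ring, pd_add]
  congr 1
  rw [pd_succ a 0]
  simp

lemma gb_mul_pd : ∀ k a, gb (a+k) k * pd 0 k = pd a k := by
  intro k
  induction k with
  | zero => intro a; simp
  | succ k ihk =>
    intro a
    induction a with
    | zero => rw [Nat.zero_add, gb_diag, one_mul]
    | succ a iha =>
      have hp : gb (a+1+(k+1)) (k+1)
          = gb (a+k+1) k + PowerSeries.X ^ (8*(k+1)) * gb (a+k+1) (k+1) := by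
        have := gb_succ_succ (a+k+1) k
        rw [show a+k+1+1 = a+1+(k+1) by ring] at this; exact this
      have h1 : gb (a+k+1) k * pd 0 k = pd (a+1) k := by
        have := ihk (a+1); rw [show a+1+k = a+k+1 by ring] at this; exact this
      have h2 : gb (a+k+1) (k+1) * pd 0 (k+1) = pd a (k+1) := by
        have := iha; rw [show a+(k+1) = a+k+1 by ring] at this; exact this
      rw [hp, pd_succ 0 k]
      have e1 : pd (a+1) (k+1) = pd (a+1) k * (1 - PowerSeries.X ^ (8*(a+1+1+k))) :=
        pd_succ (a+1) k
      have e2 : pd a (k+1) = (1 - PowerSeries.X ^ (8*(a+1))) * pd (a+1) k := pd_cons a k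
      have hx : (PowerSeries.X:PowerSeries ℚ)^(8*(k+1)) * PowerSeries.X ^ (8*(a+1))
          = PowerSeries.X ^ (8*(a+1+1+k)) := by ring
      calc (gb (a+k+1) k + PowerSeries.X ^ (8*(k+1)) * gb (a+k+1) (k+1)) *
            (pd 0 k * (1 - PowerSeries.X ^ (8*(0+1+k))))
          = gb (a+k+1) k * pd 0 k * (1 - PowerSeries.X ^ (8*(0+1+k)))
            + PowerSeries.X ^ (8*(k+1)) * (gb (a+k+1) (k+1) * pd 0 (k+1)) := by
            rw [pd_succ 0 k]; ring
        _ = pd (a+1) k * (1 - PowerSeries.X ^ (8*(0+1+k)))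
            + PowerSeries.X ^ (8*(k+1)) * ((1 - PowerSeries.X ^ (8*(a+1))) * pd (a+1) k) := by
            rw [h1, h2, e2]
        _ = pd (a+1) k * (1 - PowerSeries.X ^ (8*(a+1+1+k))) := by
            rw [← hx]; ring
        _ = pd (a+1) (k+1) := e1.symm


noncomputable def gbz (m : ℕ) (j : ℤ) : PowerSeries ℚ :=
  if 0 ≤ j then gb m j.toNat else 0

lemma gbz_of_nonneg {j : ℤ} (m : ℕ) (h : 0 ≤ j) : gbz m j = gb m j.toNat := if_pos h

lemma gbz_neg {j : ℤ} (m : ℕ) (h : j < 0) : gbz m j = 0 := if_neg (by omega)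

lemma gbz_big {j : ℤ} (m : ℕ) (h : (m:ℤ) < j) : gbz m j = 0 := by
  rw [gbz_of_nonneg m (by omega), gb_eq_zero m j.toNat (by omega)]

lemma gbz_coe (m k : ℕ) : gbz m (k : ℤ) = gb m k := by
  rw [gbz_of_nonneg m (by positivity), Int.toNat_natCast]

lemma gbz_pascal (m : ℕ) (j : ℤ) :
    gbz (m+1) j = gbz m (j-1) + PowerSeries.X ^ (8*j.toNat) * gbz m j := by
  rcases lt_trichotomy j 0 with h | h | h
  · rw [gbz_neg _ h, gbz_neg _ (by omega), gbz_neg _ h, mul_zero, add_zero]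
  · subst h
    rw [gbz_neg m (by norm_num), gbz_of_nonneg _ le_rfl, gbz_of_nonneg _ le_rfl]
    simp [gb_zero_right]
  · obtain ⟨k, rfl⟩ : ∃ k : ℕ, j = (k:ℤ)+1 := ⟨(j-1).toNat, by omega⟩
    rw [show ((k:ℤ)+1) - 1 = (k:ℤ) by ring, gbz_coe,
        show ((k:ℤ)+1) = ((k+1:ℕ):ℤ) by push_cast; ring, gbz_coe, gbz_coe,
        Int.toNat_natCast]
    exact gb_succ_succ m k

lemma gbz_symm (m : ℕ) (j : ℤ) : gbz m j = gbz m ((m:ℤ) - j) := by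
  rcases lt_trichotomy j 0 with h | h | h
  · rw [gbz_neg _ h, gbz_big _ (by omega)]
  · subst h
    rw [sub_zero, gbz_of_nonneg _ le_rfl, gbz_coe]
    simp [gb_zero_right, gb_diag]
  · by_cases h2 : j ≤ (m:ℤ)
    · rw [gbz_of_nonneg _ (by omega), gbz_of_nonneg _ (by omega)]
      have hj : (j.toNat : ℤ) = j := Int.toNat_of_nonneg (by omega)
      have e : m = (m - j.toNat) + j.toNat := by omega
      have := gb_symm (m - j.toNat) j.toNat
      rw [← e] at this
      rw [this]
      have e2 : ((m:ℤ) - j).toNat = m - j.toNat := by omega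
      rw [e2]
    · rw [gbz_big _ (by omega), gbz_neg _ (by omega)]

/-- sign `(-1)^j` -/
noncomputable def sg (j : ℤ) : PowerSeries ℚ := PowerSeries.C (R := ℚ) ((-1:ℚ)^j)

lemma neg_one_zpow_add (a b : ℤ) : ((-1:ℚ))^(a+b) = (-1)^a * (-1)^b :=
  zpow_add₀ (by norm_num) a b

lemma sg_neg (j : ℤ) : sg (-j) = sg j := by
  unfold sg
  congr 1
  rw [zpow_neg]
  rcases Int.even_or_odd j with h | h
  · rw [h.neg_one_zpow]; norm_num
  · rw [h.neg_one_zpow]; norm_num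

lemma sg_sub_one (j : ℤ) : sg (j-1) = - sg j := by
  unfold sg
  rw [show j - 1 = j + (-1) by ring, neg_one_zpow_add, ← map_neg]
  congr 1
  norm_num

lemma sg_neg_one_sub (j : ℤ) : sg (-1-j) = - sg j := by
  rw [show (-1 : ℤ) - j = (-j) - 1 by ring, sg_sub_one, sg_neg]

/-- the summand: `(-1)^j q^{j^2} * binom(m, N+j)` with `q = X^4`. -/
noncomputable def trm (m N : ℕ) (j : ℤ) : PowerSeries ℚ :=
  sg j * PowerSeries.X ^ (4 * j.natAbs^2) * gbz m ((N:ℤ) + j)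

lemma supp_fin {c : ℤ} {m : ℕ} (F : ℤ → PowerSeries ℚ)
    (hF : ∀ j, (c + j < 0 ∨ (m:ℤ) < c + j) → F j = 0) :
    (Function.support F).Finite := by
  apply Set.Finite.subset (Set.finite_Icc (-c) ((m:ℤ) - c))
  intro j hj
  simp only [Function.mem_support] at hj
  simp only [Set.mem_Icc]
  by_contra hc
  exact hj (hF j (by omega))

lemma trm_fin (m N : ℕ) : (Function.support (trm m N)).Finite := by
  refine supp_fin (c := (N:ℤ)) (m := m) _ fun j hj => ?_
  unfold trm
  rcases hj with h | h
  · rw [gbz_neg _ h, mul_zero]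
  · rw [gbz_big _ h, mul_zero]

noncomputable def Ssum (m N : ℕ) : PowerSeries ℚ := ∑ᶠ j : ℤ, trm m N j

/-- Step B summand -/
noncomputable def yb (N : ℕ) (j : ℤ) : PowerSeries ℚ :=
  sg j * PowerSeries.X ^ (4 * j.natAbs^2) *
    (PowerSeries.X ^ (8*(((N:ℤ)+1)+j).toNat) * gbz (2*N) (((N:ℤ)+1)+j))

lemma yb_fin (N : ℕ) : (Function.support (yb N)).Finite := by
  refine supp_fin (c := (N:ℤ)+1) (m := 2*N) _ fun j hj => ?_
  unfold yb
  rcases hj with h | h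
  · rw [gbz_neg _ h, mul_zero, mul_zero]
  · rw [gbz_big _ h, mul_zero, mul_zero]

lemma keyB (N : ℕ) (j : ℤ) :
    yb N (j - 1) = (-(PowerSeries.X ^ (8*N+4))) * trm (2*N) N j := by
  unfold yb trm
  rw [show ((N:ℤ)+1)+(j-1) = (N:ℤ)+j by ring]
  by_cases hc : (N:ℤ) + j < 0
  · rw [gbz_neg _ hc, mul_zero, mul_zero, mul_zero, mul_zero]
  · have ht : ((((N:ℤ))+j).toNat : ℤ) = (N:ℤ)+j := Int.toNat_of_nonneg (by omega)
    have e : 4*((j-1).natAbs)^2 + 8*(((N:ℤ)+j).toNat) = (8*N+4) + 4*(j.natAbs)^2 := by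
      apply @Nat.cast_injective ℤ
      push_cast
      rw [sq_abs, sq_abs, ht]
      ring
    have hX : (PowerSeries.X : PowerSeries ℚ) ^ (4*((j-1).natAbs)^2) *
        PowerSeries.X ^ (8*(((N:ℤ)+j).toNat))
        = PowerSeries.X ^ (8*N+4) * PowerSeries.X ^ (4*(j.natAbs)^2) := by
      rw [← pow_add, ← pow_add, e]
    rw [sg_sub_one]
    linear_combination (-(sg j) * gbz (2*N) ((N:ℤ)+j)) * hX

lemma stepB (N : ℕ) :
    Ssum (2*N+1) (N+1) = (1 - PowerSeries.X ^ (8*N+4)) * Ssum (2*N) N := by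
  have h1 : ∀ j : ℤ, trm (2*N+1) (N+1) j = trm (2*N) N j + yb N j := by
    intro j
    unfold trm yb
    rw [show (((N+1:ℕ)):ℤ) + j = ((N:ℤ)+1)+j by push_cast; ring]
    rw [gbz_pascal (2*N) (((N:ℤ)+1)+j), show ((N:ℤ)+1)+j-1 = (N:ℤ)+j by ring]
    ring
  have h2 : Ssum (2*N+1) (N+1) = Ssum (2*N) N + ∑ᶠ j : ℤ, yb N j := by
    rw [Ssum, Ssum]
    rw [← finsum_add_distrib (trm_fin (2*N) N) (yb_fin N)]
    exact finsum_congr h1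
  have h3 : (∑ᶠ j : ℤ, yb N j) = (-(PowerSeries.X ^ (8*N+4))) * Ssum (2*N) N := by
    have := finsum_comp_equiv (Equiv.subRight (1:ℤ)) (f := yb N)
    rw [← this]
    have : ∀ j : ℤ, yb N (Equiv.subRight (1:ℤ) j) =
        (-(PowerSeries.X ^ (8*N+4))) * trm (2*N) N j := fun j => keyB N j
    rw [finsum_congr this, Ssum]
    rw [mul_finsum _ _]
  rw [h2, h3]
  ring

/-- Step A second summand -/
noncomputable def ua (N : ℕ) (j : ℤ) : PowerSeries ℚ :=
  sg j * PowerSeries.X ^ (4 * j.natAbs^2) *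
    (PowerSeries.X ^ (8*(((N:ℤ)+1)+j).toNat) * gbz (2*N+1) (((N:ℤ)+1)+j))

lemma ua_fin (N : ℕ) : (Function.support (ua N)).Finite := by
  refine supp_fin (c := (N:ℤ)+1) (m := 2*N+1) _ fun j hj => ?_
  unfold ua
  rcases hj with h | h
  · rw [gbz_neg _ h, mul_zero, mul_zero]
  · rw [gbz_big _ h, mul_zero, mul_zero]

lemma keyT (N : ℕ) (j : ℤ) : trm (2*N+1) N (-j) = trm (2*N+1) (N+1) j := by
  unfold trm
  rw [sg_neg, show (-j).natAbs = j.natAbs from Int.natAbs_neg j]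
  rw [show ((N:ℕ):ℤ) + (-j) = (N:ℤ) - j by ring]
  rw [gbz_symm (2*N+1) ((N:ℤ) - j)]
  rw [show ((2*N+1:ℕ):ℤ) - ((N:ℤ) - j) = ((N+1:ℕ):ℤ) + j by push_cast; ring]

lemma keyA (N : ℕ) (j : ℤ) :
    ua N (-1 - j) = (-(PowerSeries.X ^ (8*N+4))) * trm (2*N+1) (N+1) j := by
  unfold ua trm
  rw [show ((N:ℤ)+1)+(-1-j) = (N:ℤ)-j by ring]
  rw [gbz_symm (2*N+1) ((N:ℤ) - j),
      show ((2*N+1:ℕ):ℤ) - ((N:ℤ) - j) = ((N+1:ℕ):ℤ) + j by push_cast; ring]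
  by_cases hc : ((N+1:ℕ):ℤ) + j < 0
  · rw [gbz_neg _ hc, mul_zero, mul_zero, mul_zero, mul_zero]
  · by_cases hd : (N:ℤ) < j
    · rw [gbz_big _ (by push_cast; omega), mul_zero, mul_zero, mul_zero, mul_zero]
    · have ht : ((((N:ℤ))-j).toNat : ℤ) = (N:ℤ)-j := Int.toNat_of_nonneg (by omega)
      have e : 4*((-1-j).natAbs)^2 + 8*(((N:ℤ)-j).toNat) = (8*N+4) + 4*(j.natAbs)^2 := by
        apply @Nat.cast_injective ℤ
        push_cast
        rw [sq_abs, sq_abs, ht]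
        ring
      have hX : (PowerSeries.X : PowerSeries ℚ) ^ (4*((-1-j).natAbs)^2) *
          PowerSeries.X ^ (8*(((N:ℤ)-j).toNat))
          = PowerSeries.X ^ (8*N+4) * PowerSeries.X ^ (4*(j.natAbs)^2) := by
        rw [← pow_add, ← pow_add, e]
      rw [sg_neg_one_sub]
      linear_combination (-(sg j) * gbz (2*N+1) (((N+1:ℕ):ℤ)+j)) * hX

lemma stepA (N : ℕ) :
    Ssum (2*N+2) (N+1) = (1 - PowerSeries.X ^ (8*N+4)) * Ssum (2*N+1) (N+1) := by
  have h1 : ∀ j : ℤ, trm (2*N+2) (N+1) j = trm (2*N+1) N j + ua N j := by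
    intro j
    unfold trm ua
    rw [show (((N+1:ℕ)):ℤ) + j = ((N:ℤ)+1)+j by push_cast; ring]
    rw [gbz_pascal (2*N+1) (((N:ℤ)+1)+j), show ((N:ℤ)+1)+j-1 = (N:ℤ)+j by ring]
    ring
  have h2 : Ssum (2*N+2) (N+1) = Ssum (2*N+1) N + ∑ᶠ j : ℤ, ua N j := by
    rw [Ssum, Ssum]
    rw [← finsum_add_distrib (trm_fin (2*N+1) N) (ua_fin N)]
    exact finsum_congr h1
  have hT : Ssum (2*N+1) N = Ssum (2*N+1) (N+1) := by
    rw [Ssum, Ssum]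
    rw [← finsum_comp_equiv (Equiv.neg ℤ) (f := trm (2*N+1) N)]
    exact finsum_congr fun j => keyT N j
  have h3 : (∑ᶠ j : ℤ, ua N j) = (-(PowerSeries.X ^ (8*N+4))) * Ssum (2*N+1) (N+1) := by
    rw [← finsum_comp_equiv (Equiv.subLeft (-1 : ℤ)) (f := ua N)]
    have : ∀ j : ℤ, ua N (Equiv.subLeft (-1:ℤ) j) =
        (-(PowerSeries.X ^ (8*N+4))) * trm (2*N+1) (N+1) j := fun j => keyA N j
    rw [finsum_congr this, Ssum]
    rw [mul_finsum _ _]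
  rw [h2, hT, h3]
  ring

lemma Ssum_zero : Ssum 0 0 = 1 := by
  rw [Ssum]
  have h : ∀ j : ℤ, j ≠ 0 → trm 0 0 j = 0 := by
    intro j hj
    unfold trm
    rcases lt_trichotomy j 0 with h | h | h
    · rw [show ((0:ℕ):ℤ) + j = j by ring, gbz_neg _ h, mul_zero]
    · exact absurd h hj
    · rw [show ((0:ℕ):ℤ) + j = j by ring, gbz_big _ (by omega), mul_zero]
  rw [finsum_eq_single _ 0 h]
  unfold trm sg
  norm_num
  rw [gbz_of_nonneg _ le_rfl]
  simp [gb_zero_right]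

/-- The finite Jacobi triple product at `z = -1`, base `q = X^4`. -/
lemma Fid (N : ℕ) : Ssum (2*N) N
    = (∏ k ∈ Finset.range N, (1 - PowerSeries.X ^ (8*k+4)))^2 := by
  induction N with
  | zero => simpa using Ssum_zero
  | succ N ih =>
    have : Ssum (2*(N+1)) (N+1) = (1 - PowerSeries.X ^ (8*N+4))^2 * Ssum (2*N) N := by
      rw [show 2*(N+1) = 2*N+2 by ring, stepA, stepB]
      ring
    rw [this, ih, Finset.prod_range_succ]
    rw [show 8*N+4 = 8*N+4 from rfl]
    ring

lemma pd_def (a b : ℕ) : pd a b = ∏ i ∈ Finset.range b, (1 - PowerSeries.X ^ (8*(a+1+i))) := rfl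
lemma sg_def (j : ℤ) : sg j = PowerSeries.C (R := ℚ) ((-1:ℚ)^j) := rfl
lemma trm_def (m N : ℕ) (j : ℤ) : trm m N j
  = sg j * PowerSeries.X ^ (4 * j.natAbs^2) * gbz m ((N:ℤ) + j) := rfl
lemma Ssum_def (m N : ℕ) : Ssum m N = ∑ᶠ j : ℤ, trm m N j := rfl


lemma Ecg_one_sub' (n m : ℕ) (h : n < m) : Ecg n (1 - PowerSeries.X ^ m) 1 := by
  intro d hd
  rw [map_sub, PowerSeries.coeff_X_pow, if_neg (by omega), sub_zero]

lemma pd_Ecg (m a b : ℕ) (h : m < 8*(a+1)) : Ecg m (pd a b) 1 := by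
  rw [pd_def]
  exact Ecg_prod_one fun i _ => Ecg_one_sub' m _ (by omega)

lemma Ecg_one (n : ℕ) : Ecg n (1:PowerSeries ℚ) 1 := fun _ _ => rfl

lemma gbzpd (N : ℕ) (j : ℤ) (hj : j.natAbs ≤ N) (m : ℕ)
    (hm : m < 8*(N - j.natAbs)+8) :
    Ecg m (gbz (2*N) ((N:ℤ)+j) * pd 0 N) 1 := by
  set s := j.natAbs with hs
  have hgb : gbz (2*N) ((N:ℤ)+j) = gb (2*N) (N - s) ∨
      gbz (2*N) ((N:ℤ)+j) = gb (2*N) (N + s) := by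
    rcases le_or_gt j 0 with h | h
    · left
      have e : ((N - s:ℕ):ℤ) = (N:ℤ)+j := by omega
      rw [← e, gbz_coe]
    · right
      have e : ((N + s:ℕ):ℤ) = (N:ℤ)+j := by omega
      rw [← e, gbz_coe]
  have hsymm : gb (2*N) (N + s) = gb (2*N) (N - s) := by
    have h := gb_symm (N - s) (N + s)
    rw [show (N-s)+(N+s) = 2*N by omega] at h
    exact h
  have hgb' : gbz (2*N) ((N:ℤ)+j) = gb (2*N) (N - s) := by
    rcases hgb with h | h
    · exact h
    · rw [h, hsymm]
  rw [hgb']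
  have e1 : pd 0 N = pd 0 (N - s) * pd (N - s) s := by
    have := pd_add 0 (N-s) s
    rw [show (N-s)+s = N by omega, show 0 + (N-s) = N-s by omega] at this
    exact this
  have e2 : gb (2*N) (N-s) * pd 0 (N-s) = pd (N+s) (N-s) := by
    have := gb_mul_pd (N-s) (N+s)
    rw [show (N+s)+(N-s) = 2*N by omega] at this
    exact this
  have e3 : gb (2*N) (N-s) * pd 0 N = pd (N+s) (N-s) * pd (N-s) s := by
    rw [e1, ← mul_assoc, e2]
  rw [e3]
  have h1 : Ecg m (pd (N+s) (N-s)) 1 := pd_Ecg m _ _ (by omega)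
  have h2 : Ecg m (pd (N-s) s) 1 := pd_Ecg m _ _ (by omega)
  have := h1.mul h2
  rw [one_mul] at this
  exact this

lemma coeff_term (n d : ℕ) (hd : d ≤ n) (j : ℤ) :
    (PowerSeries.coeff (R := ℚ) d) (trm (2*(n+1)) (n+1) j * pd 0 (n+1))
      = if 4 * j.natAbs^2 = d then ((-1:ℚ)^j) else 0 := by
  set N := n+1 with hN
  set s := j.natAbs with hs
  have hsq : s ≤ s^2 := by
    rcases Nat.eq_zero_or_pos s with h | h
    · simp [h]
    · calc s = s * 1 := (mul_one s).symm
        _ ≤ s * s := Nat.mul_le_mul_left s h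
        _ = s^2 := (sq s).symm
  by_cases hj : s ≤ N
  · have heq : trm (2*N) N j * pd 0 N
        = PowerSeries.C (R := ℚ) ((-1:ℚ)^j) *
          (PowerSeries.X ^ (4 * s^2) * (gbz (2*N) ((N:ℤ)+j) * pd 0 N)) := by
      rw [trm_def, sg_def]; ring
    rw [heq, PowerSeries.coeff_C_mul, PowerSeries.coeff_X_pow_mul']
    by_cases he : 4 * s^2 ≤ d
    · rw [if_pos he]
      have hkey : 8*s ≤ 4*s^2+4 := by
        have h : (8*(s:ℤ)) ≤ 4*(s:ℤ)^2+4 := by nlinarith [sq_nonneg ((s:ℤ)-1)]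
        exact_mod_cast h
      have hlt : d - 4*s^2 < 8*(N - s)+8 := by
        have := hsq
        omega
      have := gbzpd N j hj (d - 4*s^2) hlt
      rw [this (d - 4*s^2) le_rfl, PowerSeries.coeff_one]
      by_cases hc : 4*s^2 = d
      · rw [if_pos hc, if_pos (by omega), mul_one]
      · rw [if_neg (by omega), if_neg hc, mul_zero]
    · rw [if_neg he, if_neg (by omega), mul_zero]
  · have hz : gbz (2*N) ((N:ℤ)+j) = 0 := by
      rcases le_or_gt j 0 with h | h
      · exact gbz_neg _ (by omega)
      · exact gbz_big _ (by omega)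
    rw [trm_def, hz, mul_zero, zero_mul, map_zero]
    rw [if_neg (by omega)]

lemma coeff_RHS (d : ℕ) : (PowerSeries.coeff (R := ℚ) d) RHS
    = (if d = 0 then 1
       else if ∃ m : ℕ, 0 < m ∧ d = 4 * m ^ 2 then (-1) ^ Nat.sqrt (d / 4) * 2 else 0) := by
  rw [RHS, PowerSeries.coeff_mk]

lemma gauss_coeff (n d : ℕ) (hd : d ≤ n) :
    (PowerSeries.coeff (R := ℚ) d)
      ((∏ k ∈ Finset.range (n+1), (1 - PowerSeries.X ^ (8*k+4)))^2 * pd 0 (n+1))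
    = (PowerSeries.coeff (R := ℚ) d) RHS := by
  set N := n+1 with hN
  rw [← Fid N, Ssum_def]
  have hfin : (Function.support fun j => trm (2*N) N j * pd 0 N).Finite := by
    apply Set.Finite.subset (trm_fin (2*N) N)
    intro j hj
    simp only [Function.mem_support] at hj ⊢
    intro h0
    exact hj (by rw [h0, zero_mul])
  rw [finsum_mul _ _]
  have hmap := AddMonoidHom.map_finsum (f := fun j => trm (2*N) N j * pd 0 N)
    ((PowerSeries.coeff (R := ℚ) d).toAddMonoidHom) hfin
  simp only [LinearMap.toAddMonoidHom_coe] at hmap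
  rw [hmap]
  have hpt : ∀ j : ℤ, (PowerSeries.coeff (R := ℚ) d) (trm (2*N) N j * pd 0 N)
      = if 4 * j.natAbs^2 = d then ((-1:ℚ)^j) else 0 := coeff_term n d hd
  rw [finsum_congr hpt, coeff_RHS]
  by_cases h0 : d = 0
  · subst h0
    rw [finsum_eq_single _ (0:ℤ) (fun j hj => if_neg (by
      intro hc
      have h1 : j.natAbs^2 = 0 := by omega
      simp only [pow_eq_zero_iff, ne_eq, OfNat.ofNat_ne_zero, not_false_iff] at h1
      exact hj (by omega)))]
    norm_num
  · by_cases hex : ∃ m : ℕ, 0 < m ∧ d = 4 * m ^ 2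
    · obtain ⟨m, hm, rfl⟩ := hex
      rw [if_neg h0, if_pos ⟨m, hm, rfl⟩]
      have hsupp : (Function.support fun j : ℤ =>
          if 4 * j.natAbs^2 = 4*m^2 then ((-1:ℚ)^j) else 0) ⊆
          ↑({(m:ℤ), -(m:ℤ)} : Finset ℤ) := by
        intro j hj
        simp only [Function.mem_support] at hj
        have : 4 * j.natAbs^2 = 4*m^2 := by
          by_contra hc
          exact hj (if_neg hc)
        have : j.natAbs = m := by
          have h2 : j.natAbs^2 = m^2 := by omega
          exact Nat.pow_left_injective (by norm_num) h2
        simp only [Finset.coe_insert, Finset.coe_singleton, Set.mem_insert_iff,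
          Set.mem_singleton_iff]
        omega
      rw [finsum_eq_sum_of_support_subset _ hsupp]
      rw [Finset.sum_pair (by omega : (m:ℤ) ≠ -(m:ℤ))]
      rw [if_pos (by simp), if_pos (by simp)]
      have e1 : ((-1:ℚ))^((m:ℤ)) = (-1:ℚ)^(m:ℕ) := zpow_natCast _ m
      have e2 : ((-1:ℚ))^(-(m:ℤ)) = (-1:ℚ)^(m:ℕ) := by
        rw [zpow_neg, e1]
        rcases Nat.even_or_odd m with h | h
        · rw [h.neg_one_pow]; norm_num
        · rw [h.neg_one_pow]; norm_num
      rw [e1, e2]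
      have hsqrt : Nat.sqrt (4*m^2/4) = m := by
        rw [Nat.mul_div_cancel_left _ (by norm_num), sq, Nat.sqrt_eq]
      rw [hsqrt]
      ring
    · rw [if_neg h0, if_neg hex]
      have : ∀ j : ℤ, (if 4 * j.natAbs^2 = d then ((-1:ℚ)^j) else 0) = 0 := by
        intro j
        rw [if_neg]
        intro hc
        rcases Nat.eq_zero_or_pos j.natAbs with h | h
        · rw [h] at hc; norm_num at hc; omega
        · exact hex ⟨j.natAbs, h, hc.symm⟩
      rw [finsum_congr this, finsum_zero]


lemma Ecg_one_add' (n m : ℕ) (h : n < m) : Ecg n (1 + PowerSeries.X ^ m) 1 := by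
  intro d hd
  rw [map_add, PowerSeries.coeff_X_pow, if_neg (by omega), add_zero]

lemma Ecg_infProd_gen (f : ℕ → PowerSeries ℚ) (h : ∀ d k, d < k → Ecg d (f k) 1)
    (n N : ℕ) (hN : n + 1 ≤ N) :
    Ecg n (infProd f) (∏ k ∈ Finset.range N, f k) := by
  intro d hd
  rw [infProd, PowerSeries.coeff_mk]
  have h2 : Ecg d (∏ k ∈ Finset.range N, f k) (∏ k ∈ Finset.range (d+1), f k) :=
    Ecg_prod_range_tail (by omega) (fun k hk => h d k (by omega))
  exact (h2 d le_rfl).symm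

lemma ia (N : ℕ) : ∏ k ∈ Finset.range (2*N), (1 + (PowerSeries.X:PowerSeries ℚ)^(2*k+1))
    = (∏ k ∈ Finset.range N, (1 + (PowerSeries.X:PowerSeries ℚ)^(4*k+1)))
      * (∏ k ∈ Finset.range N, (1 + (PowerSeries.X:PowerSeries ℚ)^(4*k+3))) := by
  induction N with
  | zero => simp
  | succ N ih =>
    rw [show 2*(N+1) = (2*N+1)+1 by ring, Finset.prod_range_succ, Finset.prod_range_succ,
        Finset.prod_range_succ, Finset.prod_range_succ, ih,
        show 2*(2*N)+1 = 4*N+1 by ring, show 2*(2*N+1)+1 = 4*N+3 by ring]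
    ring

lemma ib (N : ℕ) : ∏ k ∈ Finset.range (2*N), (1 - (PowerSeries.X:PowerSeries ℚ)^(2*k+2))
    = (∏ k ∈ Finset.range N, (1 - (PowerSeries.X:PowerSeries ℚ)^(4*k+2)))
      * (∏ k ∈ Finset.range N, (1 - (PowerSeries.X:PowerSeries ℚ)^(4*k+4))) := by
  induction N with
  | zero => simp
  | succ N ih =>
    rw [show 2*(N+1) = (2*N+1)+1 by ring, Finset.prod_range_succ, Finset.prod_range_succ,
        Finset.prod_range_succ, Finset.prod_range_succ, ih,
        show 2*(2*N)+2 = 4*N+2 by ring, show 2*(2*N+1)+2 = 4*N+4 by ring]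
    ring

lemma idl (N : ℕ) : ∏ k ∈ Finset.range (2*N), (1 - (PowerSeries.X:PowerSeries ℚ)^(4*k+4))
    = (∏ k ∈ Finset.range N, (1 - (PowerSeries.X:PowerSeries ℚ)^(8*k+4)))
      * (∏ k ∈ Finset.range N, (1 - (PowerSeries.X:PowerSeries ℚ)^(8*k+8))) := by
  induction N with
  | zero => simp
  | succ N ih =>
    rw [show 2*(N+1) = (2*N+1)+1 by ring, Finset.prod_range_succ, Finset.prod_range_succ,
        Finset.prod_range_succ, Finset.prod_range_succ, ih,
        show 4*(2*N)+4 = 8*N+4 by ring, show 4*(2*N+1)+4 = 8*N+8 by ring]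
    ring

lemma ic (N : ℕ) : (∏ k ∈ Finset.range N, (1 + (PowerSeries.X:PowerSeries ℚ)^(4*k+2)))
    * (∏ k ∈ Finset.range N, (1 - (PowerSeries.X:PowerSeries ℚ)^(4*k+2)))
    = ∏ k ∈ Finset.range N, (1 - (PowerSeries.X:PowerSeries ℚ)^(8*k+4)) := by
  rw [← Finset.prod_mul_distrib]
  refine Finset.prod_congr rfl fun k _ => ?_
  have hX : (PowerSeries.X:PowerSeries ℚ)^(4*k+2) * (PowerSeries.X:PowerSeries ℚ)^(4*k+2)
      = (PowerSeries.X:PowerSeries ℚ)^(8*k+4) := by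
    rw [← pow_add]; congr 1; ring
  linear_combination -hX

lemma pdconv (N : ℕ) : pd 0 N
    = ∏ k ∈ Finset.range N, (1 - (PowerSeries.X:PowerSeries ℚ)^(8*k+8)) := by
  rw [pd_def]
  refine Finset.prod_congr rfl fun k _ => ?_
  congr 1
  ring

theorem main_eq : P1 * P2 * P3 * P4 = RHS * P5 := by
  ext n
  set N := n+1 with hN
  have hP1 : Ecg n P1 (∏ k ∈ Finset.range N, (1 + (PowerSeries.X:PowerSeries ℚ)^(4*k+1))) :=
    Ecg_infProd_gen _ (fun d k hk => Ecg_one_add' d _ (by omega)) n N le_rfl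
  have hP2 : Ecg n P2 (∏ k ∈ Finset.range N, (1 + (PowerSeries.X:PowerSeries ℚ)^(4*k+2))) :=
    Ecg_infProd_gen _ (fun d k hk => Ecg_one_add' d _ (by omega)) n N le_rfl
  have hP3 : Ecg n P3 (∏ k ∈ Finset.range N, (1 + (PowerSeries.X:PowerSeries ℚ)^(4*k+3))) :=
    Ecg_infProd_gen _ (fun d k hk => Ecg_one_add' d _ (by omega)) n N le_rfl
  have hP4 : Ecg n P4 (∏ k ∈ Finset.range N, (1 - (PowerSeries.X:PowerSeries ℚ)^(2*k+2))) :=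
    Ecg_infProd_gen _ (fun d k hk => Ecg_one_sub' d _ (by omega)) n N le_rfl
  have hP5 : Ecg n P5 (∏ k ∈ Finset.range N, (1 + (PowerSeries.X:PowerSeries ℚ)^(2*k+1))) :=
    Ecg_infProd_gen _ (fun d k hk => Ecg_one_add' d _ (by omega)) n N le_rfl
  have hA4ext : Ecg n (∏ k ∈ Finset.range N, (1 - (PowerSeries.X:PowerSeries ℚ)^(2*k+2)))
      (∏ k ∈ Finset.range (2*N), (1 - (PowerSeries.X:PowerSeries ℚ)^(2*k+2))) :=
    (Ecg_prod_range_tail (by omega) (fun k hk => Ecg_one_sub' n _ (by omega))).symm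
  have hHext : Ecg n (∏ k ∈ Finset.range N, (1 - (PowerSeries.X:PowerSeries ℚ)^(4*k+4)))
      (∏ k ∈ Finset.range (2*N), (1 - (PowerSeries.X:PowerSeries ℚ)^(4*k+4))) :=
    (Ecg_prod_range_tail (by omega) (fun k hk => Ecg_one_sub' n _ (by omega))).symm
  have hBext : Ecg n (∏ k ∈ Finset.range N, (1 + (PowerSeries.X:PowerSeries ℚ)^(2*k+1)))
      (∏ k ∈ Finset.range (2*N), (1 + (PowerSeries.X:PowerSeries ℚ)^(2*k+1))) :=
    (Ecg_prod_range_tail (by omega) (fun k hk => Ecg_one_add' n _ (by omega))).symm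
  -- left chain
  have hL1 : Ecg n (P1*P2*P3*P4)
      ((∏ k ∈ Finset.range N, (1 + (PowerSeries.X:PowerSeries ℚ)^(4*k+1)))
       * (∏ k ∈ Finset.range N, (1 + (PowerSeries.X:PowerSeries ℚ)^(4*k+2)))
       * (∏ k ∈ Finset.range N, (1 + (PowerSeries.X:PowerSeries ℚ)^(4*k+3)))
       * (∏ k ∈ Finset.range (2*N), (1 - (PowerSeries.X:PowerSeries ℚ)^(2*k+2)))) :=
    ((hP1.mul hP2).mul hP3).mul (hP4.trans hA4ext)
  have e1 : (∏ k ∈ Finset.range N, (1 + (PowerSeries.X:PowerSeries ℚ)^(4*k+1)))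
       * (∏ k ∈ Finset.range N, (1 + (PowerSeries.X:PowerSeries ℚ)^(4*k+2)))
       * (∏ k ∈ Finset.range N, (1 + (PowerSeries.X:PowerSeries ℚ)^(4*k+3)))
       * (∏ k ∈ Finset.range (2*N), (1 - (PowerSeries.X:PowerSeries ℚ)^(2*k+2)))
      = (∏ k ∈ Finset.range (2*N), (1 + (PowerSeries.X:PowerSeries ℚ)^(2*k+1)))
        * ((∏ k ∈ Finset.range N, (1 - (PowerSeries.X:PowerSeries ℚ)^(8*k+4)))
           * (∏ k ∈ Finset.range N, (1 - (PowerSeries.X:PowerSeries ℚ)^(4*k+4)))) := by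
    rw [ib N, ia N, ← ic N]
    ring
  have hL2 : Ecg n ((∏ k ∈ Finset.range (2*N), (1 + (PowerSeries.X:PowerSeries ℚ)^(2*k+1)))
        * ((∏ k ∈ Finset.range N, (1 - (PowerSeries.X:PowerSeries ℚ)^(8*k+4)))
           * (∏ k ∈ Finset.range N, (1 - (PowerSeries.X:PowerSeries ℚ)^(4*k+4)))))
      ((∏ k ∈ Finset.range (2*N), (1 + (PowerSeries.X:PowerSeries ℚ)^(2*k+1)))
        * ((∏ k ∈ Finset.range N, (1 - (PowerSeries.X:PowerSeries ℚ)^(8*k+4)))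
           * (∏ k ∈ Finset.range (2*N), (1 - (PowerSeries.X:PowerSeries ℚ)^(4*k+4))))) :=
    (Ecg.refl n _).mul ((Ecg.refl n _).mul hHext)
  have e2 : (∏ k ∈ Finset.range (2*N), (1 + (PowerSeries.X:PowerSeries ℚ)^(2*k+1)))
        * ((∏ k ∈ Finset.range N, (1 - (PowerSeries.X:PowerSeries ℚ)^(8*k+4)))
           * (∏ k ∈ Finset.range (2*N), (1 - (PowerSeries.X:PowerSeries ℚ)^(4*k+4))))
      = (∏ k ∈ Finset.range (2*N), (1 + (PowerSeries.X:PowerSeries ℚ)^(2*k+1)))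
        * ((∏ k ∈ Finset.range N, (1 - (PowerSeries.X:PowerSeries ℚ)^(8*k+4)))^2 * pd 0 N) := by
    rw [idl N, pdconv N]
    ring
  have hG : Ecg n ((∏ k ∈ Finset.range N, (1 - (PowerSeries.X:PowerSeries ℚ)^(8*k+4)))^2
      * pd 0 N) RHS := by
    intro d hd
    exact gauss_coeff n d hd
  have hMid : Ecg n ((∏ k ∈ Finset.range (2*N), (1 + (PowerSeries.X:PowerSeries ℚ)^(2*k+1)))
        * ((∏ k ∈ Finset.range N, (1 - (PowerSeries.X:PowerSeries ℚ)^(8*k+4)))^2 * pd 0 N))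
      ((∏ k ∈ Finset.range (2*N), (1 + (PowerSeries.X:PowerSeries ℚ)^(2*k+1))) * RHS) :=
    (Ecg.refl n _).mul hG
  -- right chain
  have hR : Ecg n (RHS * P5)
      ((∏ k ∈ Finset.range (2*N), (1 + (PowerSeries.X:PowerSeries ℚ)^(2*k+1))) * RHS) := by
    have h1 : Ecg n (RHS * P5)
        (RHS * (∏ k ∈ Finset.range (2*N), (1 + (PowerSeries.X:PowerSeries ℚ)^(2*k+1)))) :=
      (Ecg.refl n RHS).mul (hP5.trans hBext)
    have e : RHS * (∏ k ∈ Finset.range (2*N), (1 + (PowerSeries.X:PowerSeries ℚ)^(2*k+1)))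
        = (∏ k ∈ Finset.range (2*N), (1 + (PowerSeries.X:PowerSeries ℚ)^(2*k+1))) * RHS :=
      mul_comm _ _
    rw [e] at h1
    exact h1
  have htot : Ecg n (P1*P2*P3*P4) (RHS * P5) := by
    rw [e1] at hL1
    rw [e2] at hL2
    exact (hL1.trans (hL2.trans hMid)).trans hR.symm
  exact htot n le_rfl

/-- `(-q;q⁴)_∞(-q²;q⁴)_∞(-q³;q⁴)_∞ · (q²;q²)_∞/(-q;q²)_∞ = 1 + 2∑ (-1)^n q^{4n²}`. -/
theorem stmt_9 : P1 * P2 * P3 * (P4 * P5⁻¹) = RHS := by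
  have h5 : PowerSeries.constantCoeff (R := ℚ) P5 = 1 := by
    have h : PowerSeries.constantCoeff (R := ℚ) P5 = PowerSeries.coeff (R := ℚ) 0 P5 := by
      rw [PowerSeries.coeff_zero_eq_constantCoeff]
    rw [h, P5, infProd, PowerSeries.coeff_mk, Finset.prod_range_one]
    simp [PowerSeries.coeff_one, PowerSeries.coeff_X_pow]
  calc P1 * P2 * P3 * (P4 * P5⁻¹) = (P1*P2*P3*P4) * P5⁻¹ := by ring
    _ = RHS * P5 * P5⁻¹ := by rw [main_eq]
    _ = RHS := by
        rw [mul_assoc, PowerSeries.mul_inv_cancel _ (by rw [h5]; norm_num), mul_one]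
end
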